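/- arXiv:math/9508219 — 7 statements merged into one kernel-verified Lean document; each statement's English description precedes it below -/
import Mathlib

section
/- Every binary linear [21,5,10] code has no codeword of odd weight; that is, every [21,5,10] code is even. -/
open Finset

namespace E21

abbrev V := Fin 21 → ZMod 2

lemma add_self (u : V) : u + u = 0 := by
  funext i
  exact (by decide : ∀ a : ZMod 2, a + a = 0) _

lemma eq_of_add_eq_zero {u v : V} (h : u + v = 0) : u = v := by
  calc u = u + (v + v) := by rw [add_self, add_zero]
    _ = (u + v) + v := by rw [add_assoc]
    _ = 0 + v := by rw [h]
    _ = v := zero_add v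

lemma add_ne_zero {u v : V} (h : u ≠ v) : u + v ≠ 0 :=
  fun hc => h (eq_of_add_eq_zero hc)

lemma add_ne {u v w : V} (h : v ≠ u + w) : u + v ≠ w := by
  intro hc
  apply h
  calc v = (u + u) + v := by rw [add_self, zero_add]
    _ = u + (u + v) := by rw [add_assoc]
    _ = u + w := by rw [hc]


/-- weight restricted to a coordinate set -/
def fS (S : Finset (Fin 21)) (y : V) : ℕ := (S.filter (fun i => y i ≠ 0)).card

lemma fS_le (S : Finset (Fin 21)) (y : V) : fS S y ≤ S.card := card_filter_le _ _

lemma fS_union {S T : Finset (Fin 21)} (h : Disjoint S T) (y : V) :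
    fS (S ∪ T) y = fS S y + fS T y := by
  unfold fS
  rw [filter_union, card_union_of_disjoint (disjoint_filter_filter h)]

lemma hammingNorm_eq_fS (y : V) : hammingNorm y = fS univ y := rfl

lemma fS_add_of_one {S : Finset (Fin 21)} {x : V} (hx : ∀ i ∈ S, x i ≠ 0) (y : V) :
    fS S (x + y) = S.card - fS S y := by
  have h1 : ∀ a b : ZMod 2, a ≠ 0 → ((a + b ≠ 0) ↔ ¬ (b ≠ 0)) := by decide
  unfold fS
  have : S.filter (fun i => (x + y) i ≠ 0) = S.filter (fun i => ¬ (y i ≠ 0)) := by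
    apply filter_congr
    intro i hi
    simpa using h1 _ _ (hx i hi)
  rw [this, filter_not, card_sdiff_of_subset (filter_subset _ _)]

lemma fS_add_of_zero {S : Finset (Fin 21)} {x : V} (hx : ∀ i ∈ S, x i = 0) (y : V) :
    fS S (x + y) = fS S y := by
  unfold fS
  congr 1
  apply filter_congr
  intro i hi
  simp [hx i hi]

/-- column count bound: each coordinate is 1 on at most half the code. -/
lemma fiber_le {CF : Finset V} (hcard : CF.card = 32)
    (hadd : ∀ a ∈ CF, ∀ b ∈ CF, a + b ∈ CF) (i : Fin 21) :
    (CF.filter (fun y => y i ≠ 0)).card ≤ 16 := by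
  set A := CF.filter (fun y => y i ≠ 0) with hA
  set B := CF.filter (fun y => ¬ y i ≠ 0) with hB
  have hsum : A.card + B.card = 32 := by
    rw [hA, hB, card_filter_add_card_filter_not, hcard]
  rcases A.eq_empty_or_nonempty with h | ⟨t, ht⟩
  · simp [h]
  · have htC := mem_filter.mp ht
    have hAB : A.card ≤ B.card := by
      apply card_le_card_of_injOn (fun y => t + y)
      · intro y hy
        have hyC := mem_filter.mp hy
        refine mem_filter.mpr ⟨hadd _ htC.1 _ hyC.1, ?_⟩
        have : ∀ a b : ZMod 2, a ≠ 0 → b ≠ 0 → ¬ (a + b ≠ 0) := by decide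
        exact this _ _ htC.2 hyC.2
      · intro a _ b _ h
        exact add_left_cancel h
    omega

lemma sum_fS_le {CF : Finset V} (hcard : CF.card = 32)
    (hadd : ∀ a ∈ CF, ∀ b ∈ CF, a + b ∈ CF) (S : Finset (Fin 21)) :
    ∑ y ∈ CF, fS S y ≤ S.card * 16 := by
  have : ∑ y ∈ CF, fS S y = ∑ i ∈ S, (CF.filter (fun y => y i ≠ 0)).card := by
    unfold fS
    simp_rw [card_filter]
    rw [Finset.sum_comm]
  rw [this]
  calc ∑ i ∈ S, (CF.filter (fun y => y i ≠ 0)).card ≤ ∑ i ∈ S, 16 :=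
        Finset.sum_le_sum (fun i _ => fiber_le hcard hadd i)
    _ = S.card * 16 := by rw [Finset.sum_const, smul_eq_mul]


lemma add_ne_right {u v : V} (h : u ≠ 0) : u + v ≠ v := by
  intro hc
  apply h
  calc u = (u + v) + v := by rw [add_assoc, add_self, add_zero]
    _ = v + v := by rw [hc]
    _ = 0 := add_self v

lemma no11 {CF : Finset V} (hcard : CF.card = 32) (h0 : (0:V) ∈ CF)
    (hadd : ∀ a ∈ CF, ∀ b ∈ CF, a + b ∈ CF)
    (hmin : ∀ v ∈ CF, v ≠ 0 → 10 ≤ hammingNorm v)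
    {x : V} (hx : x ∈ CF) : hammingNorm x ≠ 11 := by
  intro h11
  have hx0 : x ≠ 0 := by
    intro h; rw [h] at h11; simp [hammingNorm] at h11
  set S : Finset (Fin 21) := univ.filter (fun i => x i ≠ 0) with hS
  have hScard : S.card = 11 := h11
  have hSc : Sᶜ.card = 10 := by
    rw [card_compl, hScard]; rfl
  have hxS : ∀ i ∈ S, x i ≠ 0 := fun i hi => (mem_filter.mp hi).2
  have hxSc : ∀ i ∈ Sᶜ, x i = 0 := by
    intro i hi
    have := mem_compl.mp hi
    by_contra hne
    exact this (mem_filter.mpr ⟨mem_univ i, hne⟩)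
  have hsplit : ∀ y : V, hammingNorm y = fS S y + fS Sᶜ y := by
    intro y
    rw [hammingNorm_eq_fS, ← union_compl S, fS_union disjoint_compl_right]
  -- b := fS Sᶜ ; every codeword other than 0, x has b ≥ 5
  have hb5 : ∀ y ∈ CF, y ≠ 0 → y ≠ x → 5 ≤ fS Sᶜ y := by
    intro y hy hy0 hyx
    have h1 : 10 ≤ fS S y + fS Sᶜ y := by rw [← hsplit]; exact hmin y hy hy0
    have hxy : x + y ∈ CF := hadd _ hx _ hy
    have hxy0 : x + y ≠ 0 := add_ne_zero (fun h => hyx h.symm)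
    have h2 : 10 ≤ hammingNorm (x + y) := hmin _ hxy hxy0
    rw [hsplit, fS_add_of_one hxS, fS_add_of_zero hxSc, hScard] at h2
    have h3 : fS S y ≤ 11 := hScard ▸ fS_le S y
    omega
  -- total of b over the code is at most 160
  have hbsum : ∑ y ∈ CF, fS Sᶜ y ≤ 160 := by
    have := sum_fS_le hcard hadd Sᶜ
    rwa [hSc] at this
  -- there is z ∉ {0, x} with b z = 5
  obtain ⟨z, hz, hz0, hzx, hbz⟩ : ∃ z ∈ CF, z ≠ 0 ∧ z ≠ x ∧ fS Sᶜ z = 5 := by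
    by_contra hcon
    push_neg at hcon
    have hb6 : ∀ y ∈ CF \ {0, x}, 6 ≤ fS Sᶜ y := by
      intro y hy
      obtain ⟨hyC, hyn⟩ := mem_sdiff.mp hy
      simp only [mem_insert, mem_singleton] at hyn
      push_neg at hyn
      have h5 := hb5 y hyC hyn.1 hyn.2
      have := hcon y hyC hyn.1 hyn.2
      omega
    have hsub : ({0, x} : Finset V) ⊆ CF := by
      intro w hw
      simp only [mem_insert, mem_singleton] at hw
      rcases hw with h | h <;> subst h <;> [exact h0; exact hx]
    have hcard2 : ({0, x} : Finset V).card = 2 := by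
      rw [card_insert_of_notMem (by simpa using hx0.symm), card_singleton]
    have hcard30 : (CF \ {0, x}).card = 30 := by
      rw [card_sdiff_of_subset hsub, hcard, hcard2]
    have h180 : 180 ≤ ∑ y ∈ CF \ {0, x}, fS Sᶜ y := by
      calc (180 : ℕ) = (CF \ {0, x}).card • 6 := by rw [hcard30]; rfl
        _ ≤ ∑ y ∈ CF \ {0, x}, fS Sᶜ y := card_nsmul_le_sum _ _ _ hb6
    have hle : ∑ y ∈ CF \ {0, x}, fS Sᶜ y ≤ ∑ y ∈ CF, fS Sᶜ y :=
      sum_le_sum_of_subset (sdiff_subset)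
    omega
  -- T := support of z outside S ; U := the rest
  set T : Finset (Fin 21) := Sᶜ.filter (fun i => z i ≠ 0) with hT
  have hTcard : T.card = 5 := hbz
  have hTsub : T ⊆ Sᶜ := filter_subset _ _
  set U : Finset (Fin 21) := Sᶜ \ T with hU
  have hUcard : U.card = 5 := by rw [hU, card_sdiff_of_subset hTsub, hSc, hTcard]
  have hzT : ∀ i ∈ T, z i ≠ 0 := fun i hi => (mem_filter.mp hi).2
  have hzU : ∀ i ∈ U, z i = 0 := by
    intro i hi
    obtain ⟨hi1, hi2⟩ := mem_sdiff.mp hi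
    by_contra hne
    exact hi2 (mem_filter.mpr ⟨hi1, hne⟩)
  have hTU : ∀ y : V, fS Sᶜ y = fS T y + fS U y := by
    intro y
    rw [hU]
    conv_lhs => rw [← union_sdiff_of_subset hTsub]
    rw [fS_union disjoint_sdiff]
  -- the four special codewords
  have hxz : x + z ∈ CF := hadd _ hx _ hz
  have h0x : (0:V) ≠ x := hx0.symm
  have h0z : (0:V) ≠ z := hz0.symm
  have h0xz : (0:V) ≠ x + z := (add_ne_zero (fun h => hzx h.symm)).symm
  have hxznez : x + z ≠ z := add_ne_right hx0
  have hxznex : x + z ≠ x := by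
    rw [add_comm]; exact add_ne_right hz0
  -- c := fS U ; every other codeword has c ≥ 3
  have hc3 : ∀ y ∈ CF, y ≠ 0 → y ≠ x → y ≠ z → y ≠ x + z → 3 ≤ fS U y := by
    intro y hy hy0 hyx hyz hyxz
    have hby := hb5 y hy hy0 hyx
    have hzy : z + y ∈ CF := hadd _ hz _ hy
    have hzy0 : z + y ≠ 0 := add_ne_zero (fun h => hyz h.symm)
    have hzyx : z + y ≠ x := add_ne (by rw [add_comm]; exact hyxz)
    have hbzy := hb5 _ hzy hzy0 hzyx
    rw [hTU, fS_add_of_one hzT, fS_add_of_zero hzU, hTcard] at hbzy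
    rw [hTU] at hby
    have hTy : fS T y ≤ 5 := hTcard ▸ fS_le T y
    omega
  -- total of c over the code is at most 80
  have hcsum : ∑ y ∈ CF, fS U y ≤ 80 := by
    have := sum_fS_le hcard hadd U
    rwa [hUcard] at this
  -- the contradiction
  have hsub4 : ({0, x, z, x + z} : Finset V) ⊆ CF := by
    intro w hw
    simp only [mem_insert, mem_singleton] at hw
    rcases hw with h | h | h | h <;> subst h <;>
      [exact h0; exact hx; exact hz; exact hxz]
  have hcard4 : ({0, x, z, x + z} : Finset V).card = 4 := by
    rw [card_insert_of_notMem (by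
          simp only [mem_insert, mem_singleton]
          push_neg
          exact ⟨h0x, h0z, h0xz⟩),
        card_insert_of_notMem (by
          simp only [mem_insert, mem_singleton]
          push_neg
          exact ⟨fun h => hzx h.symm, fun h => hxznex h.symm⟩),
        card_insert_of_notMem (by
          simp only [mem_singleton]
          exact fun h => hxznez h.symm),
        card_singleton]
  have hcard28 : (CF \ ({0, x, z, x + z} : Finset V)).card = 28 := by
    rw [card_sdiff_of_subset hsub4, hcard, hcard4]
  have h84 : 84 ≤ ∑ y ∈ CF \ ({0, x, z, x + z} : Finset V), fS U y := by
    calc (84 : ℕ) = (CF \ ({0, x, z, x + z} : Finset V)).card • 3 := by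
          rw [hcard28]; rfl
      _ ≤ _ := card_nsmul_le_sum _ _ _ (by
          intro y hy
          obtain ⟨hyC, hyn⟩ := mem_sdiff.mp hy
          simp only [mem_insert, mem_singleton] at hyn
          push_neg at hyn
          exact hc3 y hyC hyn.1 hyn.2.1 hyn.2.2.1 hyn.2.2.2)
  have hle : ∑ y ∈ CF \ ({0, x, z, x + z} : Finset V), fS U y ≤ ∑ y ∈ CF, fS U y :=
    sum_le_sum_of_subset sdiff_subset
  omega


lemma even_iff_cast (n : ℕ) : Even n ↔ (n : ZMod 2) = 0 := by
  rw [ZMod.natCast_eq_zero_iff]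
  exact ⟨fun ⟨r, hr⟩ => ⟨r, by omega⟩, fun ⟨c, hc⟩ => ⟨c, by omega⟩⟩

lemma wt_cast (y : V) : (hammingNorm y : ZMod 2) = ∑ i, y i := by
  have h : ∀ a : ZMod 2, (if a ≠ 0 then (1 : ZMod 2) else 0) = a := by decide
  rw [hammingNorm, Finset.card_filter]
  push_cast
  exact Finset.sum_congr rfl (fun i _ => h (y i))

end E21

open E21 in
/-- Every binary linear [21,5,10] code is even: no codeword has odd weight. -/
theorem even_21_5_10
    (C : Submodule (ZMod 2) (Fin 21 → ZMod 2))
    (hdim : Module.finrank (ZMod 2) C = 5)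
    (hmin : ∀ v ∈ C, v ≠ 0 → 10 ≤ hammingNorm v) :
    ∀ v ∈ C, Even (hammingNorm v) := by
  classical
  intro v hv
  by_contra hodd
  letI : Fintype ↥(C : Set (Fin 21 → ZMod 2)) := Fintype.ofFinite _
  set CF : Finset (Fin 21 → ZMod 2) := (C : Set _).toFinset with hCF
  have hmem : ∀ y, y ∈ CF ↔ y ∈ C := fun y => Set.mem_toFinset
  have hcard : CF.card = 32 := by
    rw [hCF, Set.toFinset_card]
    have h2 := Module.card_eq_pow_finrank (K := ZMod 2) (V := C)
    rw [hdim, ZMod.card] at h2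
    exact h2
  have h0 : (0 : V) ∈ CF := (hmem 0).mpr C.zero_mem
  have hvF : v ∈ CF := (hmem v).mpr hv
  have hadd : ∀ a ∈ CF, ∀ b ∈ CF, a + b ∈ CF := fun a ha b hb =>
    (hmem _).mpr (C.add_mem ((hmem a).mp ha) ((hmem b).mp hb))
  have hminF : ∀ y ∈ CF, y ≠ 0 → 10 ≤ hammingNorm y := fun y hy => hmin y ((hmem y).mp hy)
  have hno11 : ∀ x ∈ CF, hammingNorm x ≠ 11 := fun x hx => no11 hcard h0 hadd hminF hx
  have hv1 : (∑ i, v i) = 1 := by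
    have h1 : (hammingNorm v : ZMod 2) ≠ 0 := fun h => hodd ((even_iff_cast _).mpr h)
    rw [wt_cast v] at h1
    exact (by decide : ∀ a : ZMod 2, a ≠ 0 → a = 1) _ h1
  set O := CF.filter (fun y => ¬ Even (hammingNorm y)) with hO
  set E := CF.filter (fun y => Even (hammingNorm y)) with hE
  have hOE : E.card + O.card = 32 := by
    rw [hE, hO, card_filter_add_card_filter_not, hcard]
  have hEO : E.card ≤ O.card := by
    apply card_le_card_of_injOn (fun y => v + y)
    · intro y hy
      obtain ⟨hyC, hyev⟩ := mem_filter.mp hy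
      refine mem_filter.mpr ⟨hadd _ hvF _ hyC, ?_⟩
      intro hev
      have h1 : (hammingNorm (v + y) : ZMod 2) = 1 := by
        rw [wt_cast]
        have : ∑ i, (v + y) i = (∑ i, v i) + ∑ i, y i := by
          simp [Finset.sum_add_distrib]
        rw [this, hv1, ← wt_cast, (even_iff_cast _).mp hyev, add_zero]
      rw [(even_iff_cast _).mp hev] at h1
      exact one_ne_zero h1.symm
    · intro a _ b _ h
      exact add_left_cancel h
  have hO16 : 16 ≤ O.card := by omega
  have hsum336 : ∑ y ∈ CF, hammingNorm y ≤ 336 := by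
    have h := sum_fS_le hcard hadd Finset.univ
    simp_rw [← hammingNorm_eq_fS] at h
    simpa using h
  have hsplitsum : (∑ y ∈ E, hammingNorm y) + ∑ y ∈ O, hammingNorm y
      = ∑ y ∈ CF, hammingNorm y := by
    rw [hE, hO]
    exact sum_filter_add_sum_filter_not CF _ _
  have hOsum : O.card * 13 ≤ ∑ y ∈ O, hammingNorm y := by
    have := card_nsmul_le_sum O hammingNorm 13 (fun y hy => by
      obtain ⟨hyC, hyodd⟩ := mem_filter.mp hy
      have hy0 : y ≠ 0 := by
        intro h
        apply hyodd
        rw [h]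
        simp [hammingNorm]
      have h10 := hminF y hyC hy0
      have h11 := hno11 y hyC
      have hm := Nat.not_even_iff.mp hyodd
      omega)
    simpa using this
  have h0E : (0 : V) ∈ E := mem_filter.mpr ⟨h0, by simp [hammingNorm]⟩
  have hEsum : (E.card - 1) * 10 ≤ ∑ y ∈ E, hammingNorm y := by
    have h1 : (E.erase 0).card • 10 ≤ ∑ y ∈ E.erase 0, hammingNorm y := by
      apply card_nsmul_le_sum
      intro y hy
      have hy0 : y ≠ 0 := ne_of_mem_erase hy
      have hyE := mem_of_mem_erase hy
      exact hminF y (mem_filter.mp hyE).1 hy0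
    have h2 : ∑ y ∈ E.erase 0, hammingNorm y ≤ ∑ y ∈ E, hammingNorm y :=
      sum_le_sum_of_subset (erase_subset _ _)
    rw [card_erase_of_mem h0E] at h1
    simpa using le_trans h1 h2
  omega
end

section
/- Every binary linear [21,5,10] code contains a codeword of Hamming weight exactly 10. -/
open Finset

/-- Every binary linear [21,5,10] code contains a codeword of weight exactly 10. -/
theorem exists_weight_ten_21_5_10
    (C : Submodule (ZMod 2) (Fin 21 → ZMod 2))
    (hdim : Module.finrank (ZMod 2) C = 5)
    (hmin : ∀ v ∈ C, v ≠ 0 → 10 ≤ hammingNorm v) :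
    ∃ v ∈ C, hammingNorm v = 10 := by
  classical
  by_contra h
  push_neg at h
  have h11 : ∀ v ∈ C, v ≠ 0 → 11 ≤ hammingNorm v := by
    intro v hv hv0
    have h1 := hmin v hv hv0
    have h2 := h v hv
    omega
  have hcard : Fintype.card C = 32 := by
    have := Module.card_eq_pow_finrank (K := ZMod 2) (V := C)
    rw [hdim, ZMod.card] at this
    norm_num at this
    exact this
  -- upper bound on the total weight
  have key : ∀ i : Fin 21, (univ.filter fun v : C => (v : Fin 21 → ZMod 2) i ≠ 0).card ≤ 16 := by
    intro i
    set A := (univ.filter fun v : C => (v : Fin 21 → ZMod 2) i ≠ 0) with hA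
    set B := (univ.filter fun v : C => (v : Fin 21 → ZMod 2) i = 0) with hB
    have hAB : A.card + B.card = 32 := by
      have h2 := Finset.card_filter_add_card_filter_not
        (s := (univ : Finset C)) (p := fun v : C => (v : Fin 21 → ZMod 2) i ≠ 0)
      simp only [ne_eq, not_not] at h2
      rw [Finset.card_univ, hcard] at h2
      rw [hA, hB]
      simp only [ne_eq]
      exact h2
    rcases A.eq_empty_or_nonempty with hAe | ⟨c, hc⟩
    · simp [hAe]
    · have hc' : (c : Fin 21 → ZMod 2) i ≠ 0 := by
        rw [hA, Finset.mem_filter] at hc; exact hc.2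
      have hinj : ∀ a ∈ A, a + c ∈ B := by
        intro a ha
        rw [hA, Finset.mem_filter] at ha
        rw [hB, Finset.mem_filter]
        refine ⟨Finset.mem_univ _, ?_⟩
        have h1 : (a : Fin 21 → ZMod 2) i = 1 := by
          have : ∀ x : ZMod 2, x ≠ 0 → x = 1 := by decide
          exact this _ ha.2
        have h2 : (c : Fin 21 → ZMod 2) i = 1 := by
          have : ∀ x : ZMod 2, x ≠ 0 → x = 1 := by decide
          exact this _ hc'
        show ((a : Fin 21 → ZMod 2) + c) i = 0
        simp [Pi.add_apply, h1, h2]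
        decide
      have hle : A.card ≤ B.card := by
        apply Finset.card_le_card_of_injOn (fun a => a + c) hinj
        intro a _ b _ hab
        exact add_right_cancel hab
      omega
  have hsum : ∑ v : C, hammingNorm (v : Fin 21 → ZMod 2) ≤ 336 := by
    have : ∑ v : C, hammingNorm (v : Fin 21 → ZMod 2)
        = ∑ i : Fin 21, (univ.filter fun v : C => (v : Fin 21 → ZMod 2) i ≠ 0).card := by
      simp only [hammingNorm, Finset.card_filter]
      rw [Finset.sum_comm]
    rw [this]
    calc ∑ i : Fin 21, (univ.filter fun v : C => (v : Fin 21 → ZMod 2) i ≠ 0).card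
        ≤ ∑ _i : Fin 21, 16 := Finset.sum_le_sum fun i _ => key i
      _ = 336 := by simp
  -- lower bound
  have hnz : (univ.filter fun v : C => v ≠ 0).card = 31 := by
    have : (univ.filter fun v : C => v = 0).card = 1 := by
      rw [Finset.filter_eq']
      simp
    have h2 := Finset.card_filter_add_card_filter_not (s := (univ : Finset C))
      (p := fun v : C => v = 0)
    rw [Finset.card_univ, hcard, this] at h2
    simp only [ne_eq]
    omega
  have hlow : 341 ≤ ∑ v : C, hammingNorm (v : Fin 21 → ZMod 2) := by
    calc (341 : ℕ) = 31 * 11 := by norm_num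
      _ = (univ.filter fun v : C => v ≠ 0).card * 11 := by rw [hnz]
      _ ≤ ∑ v ∈ (univ.filter fun v : C => v ≠ 0), hammingNorm (v : Fin 21 → ZMod 2) := by
          have hb : ∀ v ∈ (univ.filter fun v : C => v ≠ 0), 11 ≤ hammingNorm (v : Fin 21 → ZMod 2) := by
            intro v hv
            rw [Finset.mem_filter] at hv
            exact h11 v v.2 (by simpa using hv.2)
          have := Finset.card_nsmul_le_sum (univ.filter fun v : C => v ≠ 0)
            (fun v : C => hammingNorm (v : Fin 21 → ZMod 2)) 11 hb
          simpa [smul_eq_mul] using this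
      _ ≤ ∑ v : C, hammingNorm (v : Fin 21 → ZMod 2) :=
          Finset.sum_le_sum_of_subset (Finset.filter_subset _ _)
  omega
end

section
/- No binary linear [21,5,10] code contains a codeword of Hamming weight 20. -/
open Finset Module

private def supp (x : Fin 21 → ZMod 2) : Finset (Fin 21) :=
  Finset.univ.filter (fun i => x i ≠ 0)

private lemma hn_eq_supp (x : Fin 21 → ZMod 2) : hammingNorm x = #(supp x) := rfl

private lemma mem_supp {x : Fin 21 → ZMod 2} {j : Fin 21} : j ∈ supp x ↔ x j ≠ 0 := by
  simp [supp]

private lemma zmod2_add_ne (a b : ZMod 2) :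
    (a + b ≠ 0 ↔ ((a ≠ 0 ∨ b ≠ 0) ∧ ¬(a ≠ 0 ∧ b ≠ 0))) := by revert a b; decide

private lemma char2_self_add {V : Type*} [AddCommGroup V] [Module (ZMod 2) V] (x : V) :
    x + x = 0 := by
  have h := two_smul (ZMod 2) x
  rw [show ((2 : ZMod 2)) = 0 from rfl, zero_smul] at h
  exact h.symm

private lemma char2_cancel {V : Type*} [AddCommGroup V] [Module (ZMod 2) V] {a b c : V}
    (h : a + b = c) : b = a + c := by
  rw [← h, ← add_assoc, char2_self_add, zero_add]

/-- support of a sum, as a card identity -/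
private lemma card_supp_add (x y : Fin 21 → ZMod 2) :
    #(supp (x + y)) + 2 * #(supp x ∩ supp y) = #(supp x) + #(supp y) := by
  have hset : supp (x + y) = (supp x ∪ supp y) \ (supp x ∩ supp y) := by
    ext j
    simp only [mem_supp, mem_sdiff, mem_union, mem_inter, Pi.add_apply]
    have := zmod2_add_ne (x j) (y j)
    tauto
  have hsub : supp x ∩ supp y ⊆ supp x ∪ supp y :=
    inter_subset_left.trans subset_union_left
  have hc := Finset.card_union_add_card_inter (supp x) (supp y)
  have hle := Finset.card_le_card hsub
  rw [hset, Finset.card_sdiff_of_subset hsub]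
  omega

/-- intersection with a third support, as a card identity -/
private lemma card_supp_add_inter (x y z : Fin 21 → ZMod 2) :
    #(supp (x + y) ∩ supp z) + 2 * #(supp x ∩ supp y ∩ supp z) =
      #(supp x ∩ supp z) + #(supp y ∩ supp z) := by
  have hset : supp (x + y) ∩ supp z =
      ((supp x ∩ supp z) ∪ (supp y ∩ supp z)) \ ((supp x ∩ supp z) ∩ (supp y ∩ supp z)) := by
    ext j
    simp only [mem_supp, mem_sdiff, mem_union, mem_inter, Pi.add_apply]
    have := zmod2_add_ne (x j) (y j)
    tauto
  have hi : (supp x ∩ supp z) ∩ (supp y ∩ supp z) = supp x ∩ supp y ∩ supp z := by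
    ext j; simp only [mem_inter]; tauto
  have hsub : (supp x ∩ supp z) ∩ (supp y ∩ supp z) ⊆ (supp x ∩ supp z) ∪ (supp y ∩ supp z) :=
    inter_subset_left.trans subset_union_left
  have hc := Finset.card_union_add_card_inter (supp x ∩ supp z) (supp y ∩ supp z)
  have hle := Finset.card_le_card hsub
  rw [hset, Finset.card_sdiff_of_subset hsub, ← hi]
  omega

private lemma exists_notMem_span3 {V : Type*} [AddCommGroup V] [Module (ZMod 2) V]
    [FiniteDimensional (ZMod 2) V] (K : Submodule (ZMod 2) V)
    (h4 : 4 ≤ finrank (ZMod 2) K) (a b c : V) :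
    ∃ w ∈ K, w ∉ Submodule.span (ZMod 2) {a, b, c} := by
  classical
  by_contra h
  push_neg at h
  have hle : K ≤ Submodule.span (ZMod 2) {a, b, c} := h
  have h1 : finrank (ZMod 2) K ≤ finrank (ZMod 2) (Submodule.span (ZMod 2) {a, b, c}) :=
    Submodule.finrank_mono hle
  have h2 : finrank (ZMod 2) (Submodule.span (ZMod 2) ({a, b, c} : Set V)) ≤
      #({a, b, c} : Set V).toFinset := finrank_span_le_card _
  have h3 : #({a, b, c} : Set V).toFinset ≤ 3 := by
    rw [Set.toFinset_insert, Set.toFinset_insert, Set.toFinset_singleton]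
    exact (Finset.card_insert_le _ _).trans (Nat.succ_le_succ
      ((Finset.card_insert_le _ _).trans (by simp)))
  omega

/-- No binary linear [21,5,10] code contains a codeword of Hamming weight 20. -/
theorem no_weight_20_in_21_5_10
    (C : Submodule (ZMod 2) (Fin 21 → ZMod 2))
    (hdim : Module.finrank (ZMod 2) C = 5)
    (hmin : ∀ v ∈ C, v ≠ 0 → 10 ≤ hammingNorm v) :
    ∀ v ∈ C, hammingNorm v ≠ 20 := by
  intro v hvC hv20
  classical
  -- find the coordinate where v vanishes
  obtain ⟨i₀, hi₀⟩ : ∃ i, v i = 0 := by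
    by_contra h
    push_neg at h
    have huniv : supp v = Finset.univ := by
      ext j; simp [mem_supp, h j]
    have : #(supp v) = 21 := by rw [huniv]; simp
    rw [hn_eq_supp] at hv20
    omega
  have hsuppv : supp v = Finset.univ.erase i₀ := by
    apply Finset.eq_of_subset_of_card_le
    · intro j hj
      rcases eq_or_ne j i₀ with rfl | hne
      · exact absurd hi₀ (mem_supp.mp hj)
      · exact Finset.mem_erase.mpr ⟨hne, Finset.mem_univ j⟩
    · rw [Finset.card_erase_of_mem (Finset.mem_univ _)]
      rw [hn_eq_supp] at hv20
      simp only [Finset.card_univ, Fintype.card_fin]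
      omega
  -- any nonzero codeword vanishing at i₀ other than v has weight 10
  have wt10 : ∀ w ∈ C, w i₀ = 0 → w ≠ 0 → w ≠ v → #(supp w) = 10 := by
    intro w hw hwi hw0 hwv
    have hsub : supp w ⊆ supp v := by
      rw [hsuppv]
      intro j hj
      rcases eq_or_ne j i₀ with rfl | hne
      · exact absurd hwi (mem_supp.mp hj)
      · exact Finset.mem_erase.mpr ⟨hne, Finset.mem_univ j⟩
    have hint : supp v ∩ supp w = supp w := by
      rw [Finset.inter_eq_right]; exact hsub
    have hcadd := card_supp_add v w
    rw [hint] at hcadd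
    have hvw : v + w ∈ C := C.add_mem hvC hw
    have hvw0 : v + w ≠ 0 := by
      intro h
      exact hwv (by rw [char2_cancel h, add_zero])
    have h1 := hmin (v + w) hvw hvw0
    have h2 := hmin w hw hw0
    rw [hn_eq_supp] at h1 h2 hv20
    omega
  -- the subcode vanishing at i₀
  let φ : C →ₗ[ZMod 2] ZMod 2 := (LinearMap.proj i₀).comp C.subtype
  have hK : 4 ≤ finrank (ZMod 2) (LinearMap.ker φ) := by
    have hrn := LinearMap.finrank_range_add_finrank_ker φ
    have hr : finrank (ZMod 2) (LinearMap.range φ) ≤ 1 := by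
      have := Submodule.finrank_le (LinearMap.range φ)
      simpa using this
    rw [hdim] at hrn
    omega
  set K := LinearMap.ker φ with hKdef
  set vC : C := ⟨v, hvC⟩ with hvCdef
  obtain ⟨w1, hw1K, hw1⟩ := exists_notMem_span3 K hK vC vC vC
  obtain ⟨w2, hw2K, hw2⟩ := exists_notMem_span3 K hK vC w1 w1
  obtain ⟨w3, hw3K, hw3⟩ := exists_notMem_span3 K hK vC w1 w2
  have hv1 : vC ∈ Submodule.span (ZMod 2) ({vC, vC, vC} : Set C) :=
    Submodule.subset_span (by simp)
  have hv2 : vC ∈ Submodule.span (ZMod 2) ({vC, w1, w1} : Set C) :=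
    Submodule.subset_span (by simp)
  have hw12 : w1 ∈ Submodule.span (ZMod 2) ({vC, w1, w1} : Set C) :=
    Submodule.subset_span (by simp)
  have hv3 : vC ∈ Submodule.span (ZMod 2) ({vC, w1, w2} : Set C) :=
    Submodule.subset_span (by simp)
  have hw13 : w1 ∈ Submodule.span (ZMod 2) ({vC, w1, w2} : Set C) :=
    Submodule.subset_span (by simp)
  have hw23 : w2 ∈ Submodule.span (ZMod 2) ({vC, w1, w2} : Set C) :=
    Submodule.subset_span (by simp)
  -- key: every suitable element of K has weight 10
  have key : ∀ (w : C), w ∈ K → w ≠ 0 → w ≠ vC → #(supp (w : Fin 21 → ZMod 2)) = 10 := by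
    intro w hwK hw0 hwv
    apply wt10 _ w.2
    · simpa [hKdef, φ] using hwK
    · exact fun h => hw0 (Subtype.ext h)
    · exact fun h => hwv (Subtype.ext h)
  -- the seven combinations
  have c1 : #(supp (w1 : Fin 21 → ZMod 2)) = 10 := by
    apply key w1 hw1K
    · exact fun h => hw1 (h ▸ Submodule.zero_mem _)
    · exact fun h => hw1 (h ▸ hv1)
  have c2 : #(supp (w2 : Fin 21 → ZMod 2)) = 10 := by
    apply key w2 hw2K
    · exact fun h => hw2 (h ▸ Submodule.zero_mem _)
    · exact fun h => hw2 (h ▸ hv2)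
  have c3 : #(supp (w3 : Fin 21 → ZMod 2)) = 10 := by
    apply key w3 hw3K
    · exact fun h => hw3 (h ▸ Submodule.zero_mem _)
    · exact fun h => hw3 (h ▸ hv3)
  have c12 : #(supp ((w1 + w2 : C) : Fin 21 → ZMod 2)) = 10 := by
    apply key _ (K.add_mem hw1K hw2K)
    · intro h
      have := char2_cancel h
      rw [add_zero] at this
      exact hw2 (this ▸ hw12)
    · intro h
      exact hw2 ((char2_cancel h) ▸ Submodule.add_mem _ hw12 hv2)
  have c13 : #(supp ((w1 + w3 : C) : Fin 21 → ZMod 2)) = 10 := by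
    apply key _ (K.add_mem hw1K hw3K)
    · intro h
      have := char2_cancel h
      rw [add_zero] at this
      exact hw3 (this ▸ hw13)
    · intro h
      exact hw3 ((char2_cancel h) ▸ Submodule.add_mem _ hw13 hv3)
  have c23 : #(supp ((w2 + w3 : C) : Fin 21 → ZMod 2)) = 10 := by
    apply key _ (K.add_mem hw2K hw3K)
    · intro h
      have := char2_cancel h
      rw [add_zero] at this
      exact hw3 (this ▸ hw23)
    · intro h
      exact hw3 ((char2_cancel h) ▸ Submodule.add_mem _ hw23 hv3)
  have c123 : #(supp ((w1 + w2 + w3 : C) : Fin 21 → ZMod 2)) = 10 := by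
    apply key _ (K.add_mem (K.add_mem hw1K hw2K) hw3K)
    · intro h
      have := char2_cancel h
      rw [add_zero] at this
      exact hw3 (this ▸ Submodule.add_mem _ hw13 hw23)
    · intro h
      exact hw3 ((char2_cancel h) ▸
        Submodule.add_mem _ (Submodule.add_mem _ hw13 hw23) hv3)
  -- now the finset arithmetic
  set x1 : Fin 21 → ZMod 2 := (w1 : Fin 21 → ZMod 2) with hx1
  set x2 : Fin 21 → ZMod 2 := (w2 : Fin 21 → ZMod 2) with hx2
  set x3 : Fin 21 → ZMod 2 := (w3 : Fin 21 → ZMod 2) with hx3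
  have e12 : ((w1 + w2 : C) : Fin 21 → ZMod 2) = x1 + x2 := rfl
  have e13 : ((w1 + w3 : C) : Fin 21 → ZMod 2) = x1 + x3 := rfl
  have e23 : ((w2 + w3 : C) : Fin 21 → ZMod 2) = x2 + x3 := rfl
  have e123 : ((w1 + w2 + w3 : C) : Fin 21 → ZMod 2) = (x1 + x2) + x3 := rfl
  rw [e12] at c12
  rw [e13] at c13
  rw [e23] at c23
  rw [e123] at c123
  have h12 := card_supp_add x1 x2
  have h13 := card_supp_add x1 x3
  have h23 := card_supp_add x2 x3
  have h12_3 := card_supp_add (x1 + x2) x3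
  have hint := card_supp_add_inter x1 x2 x3
  rw [c1, c2, c12] at h12
  rw [c1, c3, c13] at h13
  rw [c2, c3, c23] at h23
  rw [c12, c3, c123] at h12_3
  omega
end

section
/- No binary linear [21,5,10] code contains a codeword of Hamming weight 18. -/
/-- No binary linear [21,5,10] code contains a codeword of Hamming weight 18. -/
theorem no_weight_18_in_21_5_10
    (C : Submodule (ZMod 2) (Fin 21 → ZMod 2))
    (hdim : Module.finrank (ZMod 2) C = 5)
    (hmin : ∀ v ∈ C, v ≠ 0 → 10 ≤ hammingNorm v) :
    ∀ v ∈ C, hammingNorm v ≠ 18 := by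
  classical
  intro v hv h18
  -- projection onto the coordinates where v vanishes
  let f : C →ₗ[ZMod 2] ({i : Fin 21 // v i = 0} → ZMod 2) :=
    { toFun := fun c i => (c : Fin 21 → ZMod 2) i.1
      map_add' := fun _ _ => rfl
      map_smul' := fun _ _ => rfl }
  have hcard : Fintype.card {i : Fin 21 // v i = 0} = 3 := by
    have h1 : Fintype.card {i : Fin 21 // v i = 0}
        = (Finset.univ.filter fun i : Fin 21 => v i = 0).card :=
      Fintype.card_subtype _
    have h2 : (Finset.univ.filter fun i : Fin 21 => v i = 0).card
        + (Finset.univ.filter fun i : Fin 21 => ¬ v i = 0).card = 21 := by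
      rw [Finset.card_filter_add_card_filter_not]
      simp
    have h3 : (Finset.univ.filter fun i : Fin 21 => ¬ v i = 0).card = 18 := h18
    omega
  have hker : 2 ≤ Module.finrank (ZMod 2) (LinearMap.ker f) := by
    have h1 := LinearMap.finrank_range_add_finrank_ker f
    have h2 : Module.finrank (ZMod 2) (LinearMap.range f)
        ≤ Module.finrank (ZMod 2) ({i : Fin 21 // v i = 0} → ZMod 2) :=
      Submodule.finrank_le _
    rw [Module.finrank_pi, hcard] at h2
    rw [hdim] at h1
    omega
  set v' : C := ⟨v, hv⟩ with hv'
  obtain ⟨w, hwker, hwspan⟩ :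
      ∃ w ∈ LinearMap.ker f, w ∉ Submodule.span (ZMod 2) {v'} := by
    by_contra hcon
    push_neg at hcon
    have hle : LinearMap.ker f ≤ Submodule.span (ZMod 2) {v'} := hcon
    have hm := Submodule.finrank_mono hle
    have hs : Module.finrank (ZMod 2) (Submodule.span (ZMod 2) ({v'} : Set C)) ≤ 1 := by
      have := finrank_span_le_card (R := ZMod 2) ({v'} : Set C)
      simpa using this
    omega
  have hw0 : w ≠ 0 := by
    intro h
    exact hwspan (h ▸ Submodule.zero_mem _)
  have hwv : w ≠ v' := by
    intro h
    exact hwspan (h ▸ Submodule.mem_span_singleton_self _)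
  set u := (w : Fin 21 → ZMod 2) with hu
  have huC : u ∈ C := w.2
  have hu0 : u ≠ 0 := fun h => hw0 (Subtype.ext h)
  have hsupp : ∀ i, v i = 0 → u i = 0 := by
    intro i hi
    have : f w = 0 := hwker
    exact congrFun this ⟨i, hi⟩
  have hvuC : v - u ∈ C := C.sub_mem hv huC
  have hvu0 : v - u ≠ 0 := by
    intro h
    apply hwv
    apply Subtype.ext
    have : v = u := by
      have := sub_eq_zero.mp h
      exact this
    exact this.symm
  -- counting
  have key : hammingNorm (v - u) + hammingNorm u = 18 := by
    rw [← h18]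
    show (Finset.univ.filter fun i => (v - u) i ≠ 0).card
        + (Finset.univ.filter fun i => u i ≠ 0).card
        = (Finset.univ.filter fun i => v i ≠ 0).card
    rw [← Finset.card_union_of_disjoint]
    · congr 1
      ext i
      have h := hsupp i
      have hd : ∀ a b : ZMod 2, (a = 0 → b = 0) →
          (((a - b ≠ 0) ∨ (b ≠ 0)) ↔ a ≠ 0) := by decide
      simp only [Finset.mem_union, Finset.mem_filter, Finset.mem_univ, true_and,
        Pi.sub_apply]
      exact hd (v i) (u i) h
    · rw [Finset.disjoint_filter]
      intro i _ hvu hui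
      have hd : ∀ a b : ZMod 2, (a = 0 → b = 0) → (a - b ≠ 0) → (b ≠ 0) → False := by
        decide
      exact hd (v i) (u i) (hsupp i) hvu hui
  have h1 := hmin u huC hu0
  have h2 := hmin (v - u) hvuC hvu0
  omega
end

section
/- No even binary linear [29,11,10] code whose dual has minimum weight at least 6 contains a codeword of weight 28. -/
set_option maxRecDepth 4000

open Finset

def eps (x : ZMod 2) : ℤ := if x = 1 then -1 else 1

lemma zmod2_cases (x : ZMod 2) : x = 0 ∨ x = 1 := by revert x; decide

lemma eps_add (x y : ZMod 2) : eps (x + y) = eps x * eps y := by revert x y; decide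

lemma eps_sum {ι : Type*} (s : Finset ι) (f : ι → ZMod 2) :
    eps (∑ i ∈ s, f i) = ∏ i ∈ s, eps (f i) := by
  induction s using Finset.cons_induction with
  | empty => simp [eps]
  | cons a s ha ih => rw [Finset.sum_cons, Finset.prod_cons, eps_add, ih]

lemma z2_add_self (x : Fin 29 → ZMod 2) : x + x = 0 := by
  funext i
  show x i + x i = 0
  rcases zmod2_cases (x i) with h | h <;> rw [h] <;> decide


lemma wt_add (x y : Fin 29 → ZMod 2) :
    hammingNorm (x + y) + 2 * #{i | x i = 1 ∧ y i = 1} =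
      hammingNorm x + hammingNorm y := by
  simp only [hammingNorm, Finset.card_filter]
  rw [← Finset.sum_add_distrib, Finset.mul_sum, ← Finset.sum_add_distrib]
  apply Finset.sum_congr rfl
  intro i _
  have hx := zmod2_cases (x i); have hy := zmod2_cases (y i)
  have : (x + y) i = x i + y i := rfl
  rcases hx with h1 | h1 <;> rcases hy with h2 | h2 <;>
    simp [this, h1, h2, show (1:ZMod 2)+1=0 from by decide]

lemma eps_dot (x y : Fin 29 → ZMod 2) :
    eps (dotProduct x y) = (-1 : ℤ) ^ #{i | x i = 1 ∧ y i = 1} := by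
  rw [dotProduct, eps_sum]
  have : ∀ i : Fin 29, eps (x i * y i) = if x i = 1 ∧ y i = 1 then (-1 : ℤ) else 1 := by
    intro i
    rcases zmod2_cases (x i) with h1 | h1 <;> rcases zmod2_cases (y i) with h2 | h2 <;>
      simp [h1, h2, eps]
  rw [Finset.prod_congr rfl fun i _ => this i, Finset.prod_ite, Finset.prod_const,
    Finset.prod_const, one_pow, mul_one]

/-- indicator vector of a finset -/
def ind (t : Finset (Fin 29)) : Fin 29 → ZMod 2 := fun i => if i ∈ t then 1 else 0

lemma wt_ind (t : Finset (Fin 29)) : hammingNorm (ind t) = t.card := by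
  unfold hammingNorm ind
  congr 1
  ext i
  by_cases h : i ∈ t <;> simp [h]

lemma ind_ne_zero {t : Finset (Fin 29)} (h : t ≠ ∅) : ind t ≠ 0 := by
  obtain ⟨i, hi⟩ := Finset.nonempty_iff_ne_empty.2 h
  intro h0
  have := congrFun h0 i
  simp [ind, hi] at this

lemma dot_ind (c : Fin 29 → ZMod 2) (t : Finset (Fin 29)) :
    dotProduct c (ind t) = ∑ i ∈ t, c i := by
  unfold dotProduct ind
  rw [← Finset.sum_filter_add_sum_filter_not Finset.univ (· ∈ t)]
  have h1 : ∀ i ∈ Finset.univ.filter (· ∈ t), c i * (if i ∈ t then 1 else 0) = c i := by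
    intro i hi; simp at hi; simp [hi]
  have h2 : ∀ i ∈ Finset.univ.filter (¬ · ∈ t), c i * (if i ∈ t then 1 else 0) = 0 := by
    intro i hi; simp at hi; simp [hi]
  rw [Finset.sum_congr rfl h1, Finset.sum_congr rfl h2, Finset.sum_const, smul_zero, add_zero]
  congr 1
  ext i; simp

lemma gauss_contra (C : Submodule (ZMod 2) (Fin 29 → ZMod 2))
    (inst : DecidablePred (· ∈ C))
    (hdim : Module.finrank (ZMod 2) C = 11)
    (heven : ∀ v ∈ C, Even (hammingNorm v))
    (hcard : (Finset.univ.filter (· ∈ C)).card = 2 ^ 11)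
    (pair : ∀ w : Fin 29 → ZMod 2, (∃ c0 ∈ C, dotProduct c0 w = 1) →
      ∑ c ∈ Finset.univ.filter (· ∈ C), eps (dotProduct c w) = 0)
    (hsum : ∑ c ∈ Finset.univ.filter (· ∈ C), (-1:ℤ) ^ (hammingNorm c / 2) = 576) :
    False := by
  classical
  set CF : Finset (Fin 29 → ZMod 2) := Finset.univ.filter (· ∈ C) with hCF
  have memCF : ∀ c : Fin 29 → ZMod 2, c ∈ CF ↔ c ∈ C := by
    intro c; simp [hCF]
  have wt_one : ∀ x : Fin 29 → ZMod 2, #{i | x i = 1} = hammingNorm x := by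
    intro x
    unfold hammingNorm
    congr 1
    ext i
    rcases zmod2_cases (x i) with h | h <;>
      simp [h, show (0:ZMod 2) ≠ 1 from by decide, show (1:ZMod 2) ≠ 0 from by decide]
  have dot_self : ∀ x ∈ C, dotProduct x x = 0 := by
    intro x hx
    have h1 : dotProduct x x = ∑ i, x i := by
      unfold dotProduct
      apply Finset.sum_congr rfl
      intro i _
      rcases zmod2_cases (x i) with h | h <;> rw [h] <;> decide
    have h2 : eps (∑ i, x i) = (-1 : ℤ) ^ hammingNorm x := by
      rw [eps_sum]
      have : ∀ i : Fin 29, eps (x i) = if x i = 1 then (-1:ℤ) else 1 := fun i => rfl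
      rw [Finset.prod_congr rfl fun i _ => this i, Finset.prod_ite, Finset.prod_const,
        Finset.prod_const, one_pow, mul_one, wt_one]
    have h3 : eps (∑ i, x i) = 1 := by
      rw [h2, (heven x hx).neg_one_pow]
    rw [← h1] at h3
    rcases zmod2_cases (dotProduct x x) with h | h
    · exact h
    · rw [h] at h3; norm_num [eps] at h3
  have qmul : ∀ x y : Fin 29 → ZMod 2, Even (hammingNorm x) → Even (hammingNorm y) →
      (-1 : ℤ) ^ (hammingNorm x / 2) * (-1) ^ (hammingNorm y / 2)
        = (-1) ^ (hammingNorm (x + y) / 2) * eps (dotProduct x y) := by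
    intro x y hex hey
    obtain ⟨a, ha⟩ := hex
    obtain ⟨b, hb⟩ := hey
    have hwa := wt_add x y
    have heps := eps_dot x y
    set I := #{i | x i = 1 ∧ y i = 1} with hI
    have hc : hammingNorm (x + y) = 2 * (hammingNorm (x + y) / 2) := by omega
    set cc := hammingNorm (x + y) / 2 with hcc
    have habc : a + b = cc + I := by omega
    rw [heps, show hammingNorm x / 2 = a from by omega, show hammingNorm y / 2 = b from by omega,
      ← pow_add, ← pow_add, habc]
  set RF : Finset (Fin 29 → ZMod 2) :=
    CF.filter (fun z => ∀ x ∈ C, dotProduct x z = 0) with hRF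
  set T : ℤ := ∑ c ∈ CF, (-1 : ℤ) ^ (hammingNorm c / 2) with hT
  have hTT : T * T = (∑ z ∈ RF, (-1 : ℤ) ^ (hammingNorm z / 2)) * 2 ^ 11 := by
    rw [hT, Finset.sum_mul_sum]
    have inner1 : ∀ x ∈ CF, ∑ y ∈ CF,
        ((-1 : ℤ) ^ (hammingNorm x / 2) * (-1) ^ (hammingNorm y / 2))
          = ∑ z ∈ CF, (-1 : ℤ) ^ (hammingNorm z / 2) * eps (dotProduct x z) := by
      intro x hx
      have hx' := (memCF x).mp hx
      have step1 : ∀ y ∈ CF,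
          ((-1 : ℤ) ^ (hammingNorm x / 2) * (-1) ^ (hammingNorm y / 2))
            = (-1 : ℤ) ^ (hammingNorm (x + y) / 2) * eps (dotProduct x y) := by
        intro y hy
        exact qmul x y (heven x hx') (heven y ((memCF y).mp hy))
      rw [Finset.sum_congr rfl step1]
      apply Finset.sum_nbij' (fun y => x + y) (fun z => x + z)
      · intro a ha; rw [memCF] at *; exact C.add_mem hx' ha
      · intro a ha; rw [memCF] at *; exact C.add_mem hx' ha
      · intro a _; rw [← add_assoc, z2_add_self, zero_add]
      · intro a _; rw [← add_assoc, z2_add_self, zero_add]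
      · intro a _
        rw [dotProduct_add, dot_self x hx', zero_add]
    rw [Finset.sum_congr rfl inner1, Finset.sum_comm]
    have inner2 : ∀ z ∈ CF,
        ∑ x ∈ CF, (-1 : ℤ) ^ (hammingNorm z / 2) * eps (dotProduct x z)
          = if (∀ x ∈ C, dotProduct x z = 0)
            then (-1 : ℤ) ^ (hammingNorm z / 2) * 2 ^ 11 else 0 := by
      intro z hz
      rw [← Finset.mul_sum]
      by_cases hcase : ∀ x ∈ C, dotProduct x z = 0
      · have h1 : ∀ x ∈ CF, eps (dotProduct x z) = 1 := by
          intro x hx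
          rw [hcase x ((memCF x).mp hx)]
          decide
        have h2 : ∑ x ∈ CF, eps (dotProduct x z) = 2 ^ 11 := by
          rw [Finset.sum_congr rfl h1, Finset.sum_const, hcard]
          norm_num
        rw [if_pos hcase, h2]
      · rw [if_neg hcase]
        push_neg at hcase
        obtain ⟨x0, hx0, hd⟩ := hcase
        have hd1 : dotProduct x0 z = 1 := by
          rcases zmod2_cases (dotProduct x0 z) with h | h
          · exact absurd h hd
          · exact h
        rw [pair z ⟨x0, hx0, hd1⟩, mul_zero]
    rw [Finset.sum_congr rfl inner2, ← Finset.sum_filter, ← hRF, Finset.sum_mul]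
  have memRF : ∀ z, z ∈ RF ↔ (z ∈ C ∧ ∀ x ∈ C, dotProduct x z = 0) := by
    intro z
    rw [hRF, Finset.mem_filter, memCF]
  have hS : (∑ z ∈ RF, (-1 : ℤ) ^ (hammingNorm z / 2)) = 162 := by
    rw [hsum] at hTT
    omega
  by_cases hex : ∃ z0 ∈ RF, (-1 : ℤ) ^ (hammingNorm z0 / 2) = -1
  · obtain ⟨z0, hz0, hq0⟩ := hex
    have hz0' := (memRF z0).mp hz0
    have hswap : ∑ z ∈ RF, (-1 : ℤ) ^ (hammingNorm z / 2)
        = ∑ z ∈ RF, (-1 : ℤ) ^ (hammingNorm (z + z0) / 2) := by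
      apply Finset.sum_nbij' (fun z => z + z0) (fun z => z + z0)
      · intro a ha
        rw [memRF] at *
        exact ⟨C.add_mem ha.1 hz0'.1, fun x hx => by
          rw [dotProduct_add, ha.2 x hx, hz0'.2 x hx, add_zero]⟩
      · intro a ha
        rw [memRF] at *
        exact ⟨C.add_mem ha.1 hz0'.1, fun x hx => by
          rw [dotProduct_add, ha.2 x hx, hz0'.2 x hx, add_zero]⟩
      · intro a _; rw [add_assoc, z2_add_self, add_zero]
      · intro a _; rw [add_assoc, z2_add_self, add_zero]
      · intro a _; rw [add_assoc, z2_add_self, add_zero]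
    have hneg : ∀ z ∈ RF, (-1 : ℤ) ^ (hammingNorm (z + z0) / 2)
        = - (-1 : ℤ) ^ (hammingNorm z / 2) := by
      intro z hz
      have hz' := (memRF z).mp hz
      have hq := qmul z z0 (heven z hz'.1) (heven z0 hz0'.1)
      have hd0 : dotProduct z z0 = 0 := hz0'.2 z hz'.1
      rw [hd0] at hq
      have : eps 0 = 1 := by decide
      rw [this, mul_one] at hq
      rw [← hq, hq0]
      ring
    rw [Finset.sum_congr rfl hneg, Finset.sum_neg_distrib, hS] at hswap
    omega
  · push_neg at hex
    have hone : ∀ z ∈ RF, (-1 : ℤ) ^ (hammingNorm z / 2) = 1 := by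
      intro z hz
      rcases Nat.even_or_odd (hammingNorm z / 2) with h | h
      · exact h.neg_one_pow
      · exact absurd h.neg_one_pow (hex z hz)
    rw [Finset.sum_congr rfl hone, Finset.sum_const, nsmul_eq_mul, mul_one] at hS
    -- RF is the underlying set of a submodule, so its card is a power of 2
    let R : Submodule (ZMod 2) (Fin 29 → ZMod 2) :=
      { carrier := {z | z ∈ C ∧ ∀ x ∈ C, dotProduct x z = 0}
        add_mem' := fun {a b} ha hb => ⟨C.add_mem ha.1 hb.1, fun x hx => by
          rw [dotProduct_add, ha.2 x hx, hb.2 x hx, add_zero]⟩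
        zero_mem' := ⟨C.zero_mem, fun x _ => dotProduct_zero x⟩
        smul_mem' := by
          intro a z hz
          rcases zmod2_cases a with h | h
          · rw [h, zero_smul]
            exact ⟨C.zero_mem, fun x _ => dotProduct_zero x⟩
          · rw [h, one_smul]
            exact hz }
    have memR : ∀ z, z ∈ R ↔ (z ∈ C ∧ ∀ x ∈ C, dotProduct x z = 0) := fun z => Iff.rfl
    have hcardR : RF.card = 2 ^ (Module.finrank (ZMod 2) R) := by
      have h1 : Fintype.card R = 2 ^ (Module.finrank (ZMod 2) R) := by
        rw [Module.card_eq_pow_finrank (K := ZMod 2) (V := R), ZMod.card]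
      rw [← h1, Fintype.card_subtype]
      congr 1
      ext z
      simp only [Finset.mem_filter, Finset.mem_univ, true_and, memRF z, memR z]
    rw [hcardR] at hS
    have : ∀ m : ℕ, (2:ℤ) ^ m ≠ 162 := by
      intro m hm2
      rcases le_or_gt m 7 with h | h
      · have : (2:ℤ) ^ m ≤ 2 ^ 7 := pow_le_pow_right₀ (by norm_num) h
        norm_num at this
        omega
      · have : (2:ℤ) ^ 8 ≤ 2 ^ m := pow_le_pow_right₀ (by norm_num) h
        norm_num at this
        omega
    exact this _ (by exact_mod_cast hS)

/-- No even binary linear [29,11,10] code whose dual has minimum weight at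
least 6 contains a codeword of weight 28. -/
theorem no_weight28_in_even_29_11_10
    (C : Submodule (ZMod 2) (Fin 29 → ZMod 2))
    (hdim : Module.finrank (ZMod 2) C = 11)
    (hmin : ∀ v ∈ C, v ≠ 0 → 10 ≤ hammingNorm v)
    (heven : ∀ v ∈ C, Even (hammingNorm v))
    (hdual : ∀ w : Fin 29 → ZMod 2, (∀ v ∈ C, dotProduct v w = 0) → w ≠ 0 →
      6 ≤ hammingNorm w) :
    ∀ v ∈ C, hammingNorm v ≠ 28 := by
  classical
  intro v hv h28
  set CF : Finset (Fin 29 → ZMod 2) := Finset.univ.filter (· ∈ C) with hCF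
  have memCF : ∀ c : Fin 29 → ZMod 2, c ∈ CF ↔ c ∈ C := by
    intro c; simp [hCF]
  have hcard : CF.card = 2 ^ 11 := by
    have h1 : Fintype.card C = 2 ^ 11 := by
      rw [Module.card_eq_pow_finrank (K := ZMod 2) (V := C), ZMod.card, hdim]
    rw [← h1, Fintype.card_subtype]
  -- pairing: character sums vanish for non-orthogonal w
  have pair : ∀ w : Fin 29 → ZMod 2, (∃ c0 ∈ C, dotProduct c0 w = 1) →
      ∑ c ∈ CF, eps (dotProduct c w) = 0 := by
    intro w ⟨c0, hc0, hdot⟩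
    have hswap : ∑ c ∈ CF, eps (dotProduct c w)
        = ∑ c ∈ CF, eps (dotProduct (c + c0) w) := by
      apply Finset.sum_nbij' (fun c => c + c0) (fun c => c + c0)
      · intro a ha; rw [memCF] at *; exact C.add_mem ha hc0
      · intro a ha; rw [memCF] at *; exact C.add_mem ha hc0
      · intro a _; rw [add_assoc, z2_add_self, add_zero]
      · intro a _; rw [add_assoc, z2_add_self, add_zero]
      · intro a _; rw [add_assoc, z2_add_self, add_zero]
    have heq : ∀ c, eps (dotProduct (c + c0) w) = - eps (dotProduct c w) := by
      intro c
      rw [add_dotProduct, eps_add, hdot]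
      simp [eps]
    rw [Finset.sum_congr rfl (fun c _ => heq c), Finset.sum_neg_distrib] at hswap
    linarith
  -- key equidistribution count
  have key : ∀ t : Finset (Fin 29), t.card ≤ 5 →
      (∑ c ∈ CF, if (∀ i ∈ t, c i = 1) then (1:ℤ) else 0) * 2 ^ t.card = 2 ^ 11 := by
    intro t ht
    have expand : ∀ c : Fin 29 → ZMod 2,
        (∏ i ∈ t, (1 - eps (c i))) = if (∀ i ∈ t, c i = 1) then (2:ℤ) ^ t.card else 0 := by
      intro c
      by_cases h : ∀ i ∈ t, c i = 1
      · rw [if_pos h]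
        have : ∀ i ∈ t, (1 - eps (c i)) = 2 := by
          intro i hi; rw [h i hi]; norm_num [eps]
        rw [Finset.prod_congr rfl this, Finset.prod_const]
      · rw [if_neg h]
        push_neg at h
        obtain ⟨i, hi, hci⟩ := h
        apply Finset.prod_eq_zero hi
        rcases zmod2_cases (c i) with h0 | h0
        · rw [h0]; simp [eps]
        · exact absurd h0 hci
    have expand2 : ∀ c : Fin 29 → ZMod 2,
        (∏ i ∈ t, (1 - eps (c i)))
          = ∑ a ∈ t.powerset, (-1:ℤ) ^ a.card * eps (dotProduct c (ind a)) := by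
      intro c
      have h1 : ∀ i ∈ t, (1 - eps (c i)) = (-eps (c i)) + 1 := by intro i _; ring
      rw [Finset.prod_congr rfl h1, Finset.prod_add]
      apply Finset.sum_congr rfl
      intro a ha
      rw [Finset.prod_const, one_pow, mul_one, dot_ind, eps_sum]
      have : ∀ i ∈ a, -eps (c i) = (-1) * eps (c i) := by intro i _; ring
      rw [Finset.prod_congr rfl this, Finset.prod_mul_distrib, Finset.prod_const]
    have swap : ∑ c ∈ CF, (∏ i ∈ t, (1 - eps (c i)))
        = ∑ a ∈ t.powerset, (-1:ℤ) ^ a.card * ∑ c ∈ CF, eps (dotProduct c (ind a)) := by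
      rw [Finset.sum_congr rfl (fun c _ => expand2 c), Finset.sum_comm]
      exact Finset.sum_congr rfl (fun a _ => by rw [← Finset.mul_sum])
    have inner : ∀ a ∈ t.powerset,
        (-1:ℤ) ^ a.card * ∑ c ∈ CF, eps (dotProduct c (ind a))
          = if a = ∅ then 2 ^ 11 else 0 := by
      intro a ha
      rw [Finset.mem_powerset] at ha
      by_cases h0 : a = ∅
      · subst h0
        simp only [if_pos rfl, Finset.card_empty, pow_zero, one_mul]
        have : ∀ c ∈ CF, eps (dotProduct c (ind ∅)) = 1 := by
          intro c _
          rw [dot_ind, Finset.sum_empty]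
          simp [eps]
        rw [Finset.sum_congr rfl this, Finset.sum_const, hcard]
        simp
      · rw [if_neg h0]
        have hwt : hammingNorm (ind a) ≤ 5 := by
          rw [wt_ind]; exact le_trans (Finset.card_le_card ha) ht
        have hne : ind a ≠ 0 := ind_ne_zero h0
        have hex : ∃ c0 ∈ C, dotProduct c0 (ind a) = 1 := by
          by_contra hnex
          push_neg at hnex
          have hall : ∀ c ∈ C, dotProduct c (ind a) = 0 := by
            intro c hc
            rcases zmod2_cases (dotProduct c (ind a)) with h | h
            · exact h
            · exact absurd h (hnex c hc)
          have h6 := hdual (ind a) hall hne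
          exact absurd (h6.trans hwt) (by norm_num)
        rw [pair _ hex, mul_zero]
    rw [Finset.sum_congr rfl inner,
      Finset.sum_eq_single_of_mem ∅ (Finset.empty_mem_powerset t)
        (fun b _ hb => if_neg hb), if_pos rfl] at swap
    calc (∑ c ∈ CF, if (∀ i ∈ t, c i = 1) then (1:ℤ) else 0) * 2 ^ t.card
        = ∑ c ∈ CF, (if (∀ i ∈ t, c i = 1) then (1:ℤ) else 0) * 2 ^ t.card := by
          rw [Finset.sum_mul]
      _ = ∑ c ∈ CF, (if (∀ i ∈ t, c i = 1) then (2:ℤ) ^ t.card else 0) := by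
          apply Finset.sum_congr rfl; intro c _; rw [ite_mul, one_mul, zero_mul]
      _ = ∑ c ∈ CF, (∏ i ∈ t, (1 - eps (c i))) := by
          exact Finset.sum_congr rfl fun c _ => (expand c).symm
      _ = 2 ^ 11 := swap
  -- binomial moments
  have mom : ∀ s : ℕ, s ≤ 5 →
      (∑ c ∈ CF, (Nat.choose (hammingNorm c) s : ℤ)) * 2 ^ s
        = (Nat.choose 29 s : ℤ) * 2 ^ 11 := by
    intro s hs
    have hc : ∀ c : Fin 29 → ZMod 2, (Nat.choose (hammingNorm c) s : ℤ)
        = ∑ T ∈ Finset.powersetCard s Finset.univ, (if (∀ i ∈ T, c i = 1) then (1:ℤ) else 0) := by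
      intro c
      rw [Finset.sum_boole]
      have hfe : Finset.filter (fun T => ∀ i ∈ T, c i = 1) (Finset.powersetCard s Finset.univ)
          = Finset.powersetCard s (Finset.univ.filter (fun i => c i ≠ 0)) := by
        ext T
        simp only [Finset.mem_filter, Finset.mem_powersetCard]
        constructor
        · rintro ⟨⟨_, hcard⟩, hall⟩
          refine ⟨fun i hi => ?_, hcard⟩
          simp only [Finset.mem_filter, Finset.mem_univ, true_and]
          rw [hall i hi]; decide
        · rintro ⟨hsub, hcard⟩
          refine ⟨⟨Finset.subset_univ T, hcard⟩, fun i hi => ?_⟩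
          have h2 := hsub hi
          simp only [Finset.mem_filter, Finset.mem_univ, true_and] at h2
          rcases zmod2_cases (c i) with h | h
          · exact absurd h h2
          · exact h
      rw [hfe, Finset.card_powersetCard]
      rfl
    rw [Finset.sum_congr rfl (fun c _ => hc c), Finset.sum_comm, Finset.sum_mul]
    have : ∀ T ∈ Finset.powersetCard s Finset.univ,
        (∑ c ∈ CF, if (∀ i ∈ T, c i = 1) then (1:ℤ) else 0) * 2 ^ s = 2 ^ 11 := by
      intro T hT
      rw [Finset.mem_powersetCard] at hT
      rw [← hT.2]
      exact key T (hT.2 ▸ hs)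
    rw [Finset.sum_congr rfl this, Finset.sum_const, Finset.card_powersetCard,
      Finset.card_univ, Fintype.card_fin, nsmul_eq_mul]
  -- the zero coordinate of v
  have hcompl : (Finset.univ.filter (fun i => v i = 0)).card = 1 := by
    have h1 : (Finset.univ.filter (fun i => v i = 0)).card
        + (Finset.univ.filter (fun i => ¬ v i = 0)).card = 29 := by
      rw [Finset.card_filter_add_card_filter_not (p := fun i => v i = 0)]
      simp
    have h2 : (Finset.univ.filter (fun i => ¬ v i = 0)).card = 28 := h28
    omega
  obtain ⟨j, hj⟩ := Finset.card_eq_one.mp hcompl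
  have hvj : v j = 0 := by
    have : j ∈ Finset.univ.filter (fun i => v i = 0) := hj ▸ Finset.mem_singleton_self j
    exact (Finset.mem_filter.mp this).2
  have hvi : ∀ i : Fin 29, i ≠ j → v i = 1 := by
    intro i hij
    rcases zmod2_cases (v i) with h | h
    · exfalso
      have : i ∈ Finset.univ.filter (fun i => v i = 0) := by simp [h]
      rw [hj, Finset.mem_singleton] at this
      exact hij this
    · exact h
  -- weight of c + v
  have hkey : ∀ c : Fin 29 → ZMod 2,
      hammingNorm (c + v) + 2 * hammingNorm c
        = hammingNorm c + 28 + 2 * (if c j = 1 then 1 else 0) := by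
    intro c
    have hwa := wt_add c v
    rw [h28] at hwa
    have e1 : hammingNorm c = (∑ i ∈ Finset.univ.erase j, if ¬ c i = 0 then 1 else 0)
        + (if ¬ c j = 0 then (1:ℕ) else 0) := by
      rw [hammingNorm, Finset.card_filter,
        ← Finset.sum_erase_add Finset.univ _ (Finset.mem_univ j)]
    have e2 : #{i | c i = 1 ∧ v i = 1}
        = ∑ i ∈ Finset.univ.erase j, if ¬ c i = 0 then 1 else 0 := by
      rw [Finset.card_filter, ← Finset.sum_erase_add Finset.univ _ (Finset.mem_univ j)]
      have hz : (if (c j = 1 ∧ v j = 1) then (1:ℕ) else 0) = 0 := by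
        simp [hvj, show (0:ZMod 2) ≠ 1 from by decide]
      rw [hz, add_zero]
      apply Finset.sum_congr rfl
      intro i hi
      rw [hvi i (Finset.ne_of_mem_erase hi)]
      rcases zmod2_cases (c i) with h | h <;>
        simp [h, show (0:ZMod 2) ≠ 1 from by decide, show (1:ZMod 2) ≠ 0 from by decide]
    have e3 : (if ¬ c j = 0 then (1:ℕ) else 0) = (if c j = 1 then 1 else 0) := by
      rcases zmod2_cases (c j) with h | h <;>
        simp [h, show (0:ZMod 2) ≠ 1 from by decide, show (1:ZMod 2) ≠ 0 from by decide]
    omega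
  have hvne : v ≠ 0 := by
    intro h0; rw [h0] at h28; simp at h28
  -- weight classification
  have wset : ∀ c ∈ C, c = 0 ∨ c = v ∨
      (10 ≤ hammingNorm c ∧ hammingNorm c ≤ 20 ∧ Even (hammingNorm c)) := by
    intro c hc
    by_cases hc0 : c = 0
    · exact Or.inl hc0
    by_cases hcv : c = v
    · exact Or.inr (Or.inl hcv)
    right; right
    have hcv0 : c + v ≠ 0 := by
      intro h0
      apply hcv
      have : c + v + v = v := by rw [h0, zero_add]
      rwa [add_assoc, z2_add_self, add_zero] at this
    have h1 := hmin c hc hc0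
    have h2 := hmin (c + v) (C.add_mem hc hv) hcv0
    have h3 := hkey c
    have h4 : (if c j = 1 then (1:ℕ) else 0) ≤ 1 := by split <;> omega
    exact ⟨h1, by omega, heven c hc⟩
  have wt28 : ∀ c ∈ C, hammingNorm c = 28 → c = v := by
    intro c hc hw
    by_contra hcv
    have hcv0 : c + v ≠ 0 := by
      intro h0
      apply hcv
      have : c + v + v = v := by rw [h0, zero_add]
      rwa [add_assoc, z2_add_self, add_zero] at this
    have h2 := hmin (c + v) (C.add_mem hc hv) hcv0
    have h3 := hkey c
    have h4 : (if c j = 1 then (1:ℕ) else 0) ≤ 1 := by split <;> omega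
    omega
  -- the signed sum T
  set T : ℤ := ∑ c ∈ CF, (-1 : ℤ) ^ (hammingNorm c / 2) with hT
  -- pointwise master identity
  have master : ∀ c ∈ CF,
      (-176096 : ℤ) * (Nat.choose (hammingNorm c) 0 : ℤ)
        + 27036 * 2 * (Nat.choose (hammingNorm c) 1 : ℤ)
        + (-3500) * 4 * (Nat.choose (hammingNorm c) 2 : ℤ)
        + 359 * 8 * (Nat.choose (hammingNorm c) 3 : ℤ)
        + (-26) * 16 * (Nat.choose (hammingNorm c) 4 : ℤ)
        + 32 * (Nat.choose (hammingNorm c) 5 : ℤ)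
      = 32 * (-1 : ℤ) ^ (hammingNorm c / 2)
        + (if c = 0 then (-176128 : ℤ) else 0) + (if c = v then (81920 : ℤ) else 0) := by
    intro c hcf
    have hc := (memCF c).mp hcf
    rcases wset c hc with h0 | hcv | ⟨hlo, hhi, heve⟩
    · subst h0
      rw [if_pos rfl, if_neg (Ne.symm hvne)]
      simp only [hammingNorm_zero]
      norm_num
    · subst hcv
      rw [if_neg (by intro h; exact hvne h), if_pos rfl, h28]
      norm_num [Nat.choose]
    · have hne0 : c ≠ 0 := by
        intro h0; rw [h0, hammingNorm_zero] at hlo; omega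
      have hnev : c ≠ v := by
        intro h0; rw [h0, h28] at hhi; omega
      rw [if_neg hne0, if_neg hnev, add_zero, add_zero]
      obtain ⟨k, hk⟩ := heve
      have hk5 : 5 ≤ k := by omega
      have hk10 : k ≤ 10 := by omega
      have hw : hammingNorm c = 2 * k := by omega
      rw [hw]
      interval_cases k <;> norm_num [Nat.choose]
  -- compute T
  have X0 : ∑ c ∈ CF, (Nat.choose (hammingNorm c) 0 : ℤ) = 2048 := by
    have h := mom 0 (by norm_num)
    rw [show ((Nat.choose 29 0 : ℤ)) = 1 from by norm_num [Nat.choose],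
      show ((2:ℤ) ^ 0) = 1 from by norm_num,
      show ((2:ℤ) ^ 11) = 2048 from by norm_num] at h
    omega
  have X1 : ∑ c ∈ CF, (Nat.choose (hammingNorm c) 1 : ℤ) = 29696 := by
    have h := mom 1 (by norm_num)
    rw [show ((Nat.choose 29 1 : ℤ)) = 29 from by norm_num [Nat.choose],
      show ((2:ℤ) ^ 1) = 2 from by norm_num,
      show ((2:ℤ) ^ 11) = 2048 from by norm_num] at h
    omega
  have X2 : ∑ c ∈ CF, (Nat.choose (hammingNorm c) 2 : ℤ) = 207872 := by
    have h := mom 2 (by norm_num)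
    rw [show ((Nat.choose 29 2 : ℤ)) = 406 from by norm_num [Nat.choose],
      show ((2:ℤ) ^ 2) = 4 from by norm_num,
      show ((2:ℤ) ^ 11) = 2048 from by norm_num] at h
    omega
  have X3 : ∑ c ∈ CF, (Nat.choose (hammingNorm c) 3 : ℤ) = 935424 := by
    have h := mom 3 (by norm_num)
    rw [show ((Nat.choose 29 3 : ℤ)) = 3654 from by norm_num [Nat.choose],
      show ((2:ℤ) ^ 3) = 8 from by norm_num,
      show ((2:ℤ) ^ 11) = 2048 from by norm_num] at h
    omega
  have X4 : ∑ c ∈ CF, (Nat.choose (hammingNorm c) 4 : ℤ) = 3040128 := by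
    have h := mom 4 (by norm_num)
    rw [show ((Nat.choose 29 4 : ℤ)) = 23751 from by norm_num [Nat.choose],
      show ((2:ℤ) ^ 4) = 16 from by norm_num,
      show ((2:ℤ) ^ 11) = 2048 from by norm_num] at h
    omega
  have X5 : ∑ c ∈ CF, (Nat.choose (hammingNorm c) 5 : ℤ) = 7600320 := by
    have h := mom 5 (by norm_num)
    rw [show ((Nat.choose 29 5 : ℤ)) = 118755 from by norm_num [Nat.choose],
      show ((2:ℤ) ^ 5) = 32 from by norm_num,
      show ((2:ℤ) ^ 11) = 2048 from by norm_num] at h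
    omega
  have hsum := Finset.sum_congr rfl master
  have hL : ∑ c ∈ CF, ((-176096 : ℤ) * (Nat.choose (hammingNorm c) 0 : ℤ)
        + 27036 * 2 * (Nat.choose (hammingNorm c) 1 : ℤ)
        + (-3500) * 4 * (Nat.choose (hammingNorm c) 2 : ℤ)
        + 359 * 8 * (Nat.choose (hammingNorm c) 3 : ℤ)
        + (-26) * 16 * (Nat.choose (hammingNorm c) 4 : ℤ)
        + 32 * (Nat.choose (hammingNorm c) 5 : ℤ)) = -75776 := by
    simp only [Finset.sum_add_distrib, ← Finset.mul_sum]
    rw [X0, X1, X2, X3, X4, X5]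
    norm_num
  have hR : ∑ c ∈ CF, (32 * (-1 : ℤ) ^ (hammingNorm c / 2)
        + (if c = 0 then (-176128 : ℤ) else 0) + (if c = v then (81920 : ℤ) else 0))
      = 32 * T + (-176128) + 81920 := by
    rw [Finset.sum_add_distrib, Finset.sum_add_distrib, ← Finset.mul_sum, ← hT]
    congr 1
    · congr 1
      rw [Finset.sum_ite_eq' CF 0 (fun _ => (-176128 : ℤ))]
      rw [if_pos ((memCF 0).mpr C.zero_mem)]
    · rw [Finset.sum_ite_eq' CF v (fun _ => (81920 : ℤ))]
      rw [if_pos ((memCF v).mpr hv)]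
  have hT576 : T = 576 := by
    rw [hsum, hR] at hL
    omega
  exact gauss_contra C inferInstance hdim heven hcard pair hT576
end

section
/- Let D be a binary linear code with automorphism subgroup G acting on V = F_2^m, inducing an action of G on lexicographically ordered j-element sequences of vectors from V. If x = (v_1,...,v_j) is G-minimal (meaning g·x >= x in lexicographic order for all g in G) and admissible, then the truncation (v_1,...,v_{j-1}) is G-minimal. -/
/-- The natural linear order on `F_2 = ZMod 2` (with `0 < 1`). -/
noncomputable instance : LinearOrder (ZMod 2) := inferInstanceAs (LinearOrder (Fin 2))

/-- The strict lexicographic order on `V = F_2^m`. -/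
def vlt {m : ℕ} (a b : Fin m → ZMod 2) : Prop :=
  Pi.Lex (· < ·) (· < ·) a b

/-- The (non-strict) lexicographic order on `V = F_2^m`. -/
def vle {m : ℕ} (a b : Fin m → ZMod 2) : Prop :=
  vlt a b ∨ a = b

/-- The (non-strict) lexicographic order on sequences of vectors of `V`. -/
def seqLE {m : ℕ} (x y : List (Fin m → ZMod 2)) : Prop :=
  List.Lex vlt x y ∨ x = y

/-- A sequence `x` is `G`-minimal for a bijection `g` of `V` if the result of
acting by `g` elementwise and re-sorting into lexicographic order is `≥ x`. -/
def GMinimalFor {m : ℕ} (g : Equiv.Perm (Fin m → ZMod 2))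
    (x : List (Fin m → ZMod 2)) : Prop :=
  ∀ y : List (Fin m → ZMod 2), y.Perm (x.map g) → y.Pairwise vle → seqLE x y

noncomputable instance {m : ℕ} : LinearOrder (Lex (Fin m → ZMod 2)) :=
  @Pi.Lex.linearOrder (Fin m) (fun _ => ZMod 2) _
    (inferInstanceAs (WellFoundedLT (Fin m))) _

lemma vlt_iff {m : ℕ} {a b : Fin m → ZMod 2} : vlt a b ↔ toLex a < toLex b := Iff.rfl

lemma vle_iff {m : ℕ} {a b : Fin m → ZMod 2} : vle a b ↔ toLex a ≤ toLex b := by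
  rw [le_iff_lt_or_eq, vle, vlt_iff, toLex.injective.eq_iff.symm]
  exact Iff.rfl

instance {m : ℕ} : IsTotal (Fin m → ZMod 2) vle :=
  ⟨fun a b => by rw [vle_iff, vle_iff]; exact le_total _ _⟩

instance {m : ℕ} : IsTrans (Fin m → ZMod 2) vle :=
  ⟨fun a b c hab hbc => by rw [vle_iff] at *; exact le_trans hab hbc⟩

instance {m : ℕ} : IsTrichotomous (Fin m → ZMod 2) vlt :=
  ⟨fun a b h1 h2 => by
    rcases lt_trichotomy (toLex a) (toLex b) with h | h | h
    · exact absurd h h1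
    · exact toLex.injective h
    · exact absurd h h2⟩

instance {m : ℕ} : IsAsymm (Fin m → ZMod 2) vlt :=
  ⟨fun _ _ h h' => absurd (vlt_iff.mp h) (not_lt_of_gt (vlt_iff.mp h'))⟩

noncomputable instance {m : ℕ} : DecidableRel (vle (m := m)) := Classical.decRel _

lemma vle_vlt_trans {m : ℕ} {a b c : Fin m → ZMod 2} (h : vle a b) (h' : vlt b c) :
    vlt a c := by
  rw [vle_iff] at h; rw [vlt_iff] at *; exact lt_of_le_of_lt h h'

lemma not_vle {m : ℕ} {a b : Fin m → ZMod 2} (h : ¬ vle a b) : vlt b a := by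
  rw [vle_iff] at h; rw [vlt_iff]; exact lt_of_not_ge h

lemma orderedInsert_head {m : ℕ} {a : Fin m → ZMod 2} {l : List (Fin m → ZMod 2)}
    (h : ∀ b ∈ l, vle a b) : l.orderedInsert vle a = a :: l := by
  cases l with
  | nil => rfl
  | cons c t =>
      simp only [List.orderedInsert, if_pos (h c List.mem_cons_self)]

/-- Key lemma: inserting any element into a sorted sequence strictly below the
truncation of a sorted `x` yields a sequence strictly below `x`. -/
lemma key_insert {m : ℕ} :
    ∀ (x : List (Fin m → ZMod 2)), ∀ (y : List (Fin m → ZMod 2)) (z : Fin m → ZMod 2),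
      x.Pairwise vle → y.Pairwise vle → List.Lex vlt y x.dropLast →
      y.length + 1 = x.length → List.Lex vlt (y.orderedInsert vle z) x := by
  intro x
  induction x with
  | nil => intro y z _ _ _ hl; simp at hl
  | cons a xs ih =>
      intro y z hx hy hlex hl
      cases xs with
      | nil =>
          exact absurd hlex List.not_lex_nil
      | cons a' xs' =>
          rw [List.dropLast_cons₂] at hlex
          cases y with
          | nil => simp at hl
          | cons b ys =>
              simp only [List.length_cons] at hl
              have hys : ys.Pairwise vle := hy.of_cons
              have hxs : (a' :: xs').Pairwise vle := hx.of_cons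
              cases hlex with
              | rel hba =>
                  -- b < a
                  simp only [List.orderedInsert]
                  split
                  · rename_i hzb
                    exact List.Lex.rel (vle_vlt_trans hzb hba)
                  · exact List.Lex.rel hba
              | cons htail =>
                  -- y = a :: ys, Lex ys (dropLast (a'::xs'))
                  simp only [List.orderedInsert]
                  split
                  · rename_i hza
                    -- z ≤ a
                    rcases hza with hza | rfl
                    · exact List.Lex.rel hza
                    · -- z = a; note a :: ys = orderedInsert a ys since y sorted
                      have hhead : ∀ c ∈ ys, vle z c := by
                        intro c hc
                        exact (List.pairwise_cons.mp hy).1 c hc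
                      have := ih ys z hxs hys htail
                        (by simp only [List.length_cons]; omega)
                      rw [orderedInsert_head hhead] at this
                      exact List.Lex.cons this
                  · exact List.Lex.cons (ih ys z hxs hys htail
                      (by simp only [List.length_cons]; omega))

/-- Truncation preserves `G`-minimality.  Let `D` be a binary linear code with
automorphism subgroup `G` inducing (via a homomorphism `φ`) an action on
`V = F_2^m`, and hence on lexicographically ordered `j`-element sequences of
vectors of `V` (a sequence is acted on elementwise and then re-sorted into
lexicographic order).  If a lexicographically ordered sequence
`x = (v_1, …, v_j)` is admissible and `G`-minimal — i.e. `g • x ≥ x` for all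
`g ∈ G` — then its truncation `(v_1, …, v_{j-1})`, obtained by discarding the
rightmost element, is again `G`-minimal. -/
theorem truncation_G_minimal {n m j : ℕ}
    (D : Submodule (ZMod 2) (Fin n → ZMod 2))
    (G : Subgroup (Equiv.Perm (Fin n)))
    (hG : ∀ σ ∈ G, Submodule.map (LinearMap.funLeft (ZMod 2) (ZMod 2) σ) D = D)
    (φ : G →* Equiv.Perm (Fin m → ZMod 2))
    (Admissible : List (Fin m → ZMod 2) → Prop)
    (x : List (Fin m → ZMod 2))
    (hlen : x.length = j)
    (hsorted : x.Pairwise vle)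
    (hadm : Admissible x)
    (hmin : ∀ g : G, GMinimalFor (φ g) x) :
    ∀ g : G, GMinimalFor (φ g) x.dropLast := by
  intro g y hperm hysorted
  rcases eq_or_ne x [] with rfl | hne
  · simp only [List.dropLast_nil, List.map_nil, List.perm_nil] at hperm
    exact Or.inr hperm.symm
  by_contra hcon
  -- from ¬ seqLE x' y, get strict Lex y (dropLast x)
  have hy_lt : List.Lex vlt y x.dropLast := by
    rcases trichotomous_of (List.Lex vlt) x.dropLast y with h | h | h
    · exact absurd (Or.inl h) hcon
    · exact absurd (Or.inr h) hcon
    · exact h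
  set z := φ g (x.getLast hne) with hz
  set y' := y.orderedInsert vle z with hy'
  have hperm' : y'.Perm (x.map (φ g)) := by
    have h1 : y'.Perm (z :: y) := List.perm_orderedInsert vle z y
    have h2 : (z :: y).Perm (z :: x.dropLast.map (φ g)) := List.Perm.cons z hperm
    have h3 : (z :: x.dropLast.map (φ g)).Perm (x.map (φ g)) := by
      conv_rhs => rw [← List.dropLast_append_getLast hne]
      rw [List.map_append]
      simp only [List.map_cons, List.map_nil]
      exact (List.perm_append_singleton z _).symm
    exact (h1.trans h2).trans h3
  have hsorted' : y'.Pairwise vle := hysorted.orderedInsert z y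
  have hxle : seqLE x y' := hmin g y' hperm' hsorted'
  have hlt : List.Lex vlt y' x := by
    apply key_insert x y z hsorted hysorted hy_lt
    have h1 := hperm.length_eq
    simp only [List.length_map, List.length_dropLast] at h1
    have h2 : 0 < x.length := List.length_pos_iff.mpr hne
    rw [h1]
    exact Nat.succ_pred_eq_of_pos h2
  rcases hxle with h | heq
  · exact asymm_of (List.Lex vlt) h hlt
  · exact asymm_of (List.Lex vlt) (heq ▸ hlt) (heq ▸ hlt)
end

section
/- Every binary linear [31,13,10] even code whose dual code has minimum weight at least 7 contains a codeword of Hamming weight exactly 20. -/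
set_option maxRecDepth 10000

open Finset

/-- Projection of the code onto any ≤6 coordinates is surjective. -/
lemma proj_surj (C : Submodule (ZMod 2) (Fin 31 → ZMod 2))
    (hdual : ∀ w : Fin 31 → ZMod 2, (∀ v ∈ C, dotProduct v w = 0) → w ≠ 0 →
      7 ≤ hammingNorm w)
    (S : Finset (Fin 31)) (hS : S.card ≤ 6) (c : Fin 31 → ZMod 2) :
    ∃ v ∈ C, ∀ i ∈ S, v i = c i := by
  classical
  set φ : (Fin 31 → ZMod 2) →ₗ[ZMod 2] (↥S → ZMod 2) :=
    LinearMap.funLeft (ZMod 2) (ZMod 2) Subtype.val with hφ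
  have hD : C.map φ = ⊤ := by
    by_contra hne
    obtain ⟨f, hf0, hfbot⟩ :=
      Submodule.exists_dual_map_eq_bot_of_lt_top (p := C.map φ)
        (lt_top_iff_ne_top.2 hne) inferInstance
    set w : Fin 31 → ZMod 2 :=
      fun i => if h : i ∈ S then f (fun j => if (⟨i, h⟩ : ↥S) = j then 1 else 0) else 0 with hw
    have hwi : ∀ (i : ↥S), w i = f (fun j => if i = j then 1 else 0) := by
      rintro ⟨i, hi⟩
      simp only [hw, dif_pos hi]
    have hdot : ∀ v ∈ C, dotProduct v w = 0 := by
      intro v hv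
      have h1 : dotProduct v w = ∑ i ∈ S, v i * w i := by
        rw [dotProduct]
        refine (Finset.sum_subset (Finset.subset_univ S) ?_).symm
        intro i _ hi
        simp [hw, dif_neg hi]
      have h2 : ∑ i ∈ S, v i * w i = f (φ v) := by
        rw [LinearMap.pi_apply_eq_sum_univ f (φ v)]
        rw [← Finset.sum_attach S (fun i => v i * w i)]
        refine Finset.sum_congr rfl ?_
        intro i _
        rw [hwi i]
        simp [hφ, LinearMap.funLeft, smul_eq_mul]
      have h3 : f (φ v) = 0 := by
        have : f (φ v) ∈ (C.map φ).map f :=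
          Submodule.mem_map_of_mem (Submodule.mem_map_of_mem hv)
        rwa [hfbot, Submodule.mem_bot] at this
      rw [h1, h2, h3]
    have hwne : w ≠ 0 := by
      intro h0
      apply hf0
      refine LinearMap.ext fun x => ?_
      rw [LinearMap.pi_apply_eq_sum_univ f x]
      have : ∀ i : ↥S, f (fun j => if i = j then 1 else 0) = 0 := by
        intro i; rw [← hwi i, h0]; rfl
      simp [this]
    have hwcard : hammingNorm w ≤ S.card := by
      refine Finset.card_le_card ?_
      intro i hi
      simp only [Finset.mem_filter] at hi
      by_contra hiS
      exact hi.2 (by simp [hw, dif_neg hiS])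
    have := hdual w hdot hwne
    omega
  have : (fun i : ↥S => c i) ∈ C.map φ := hD ▸ Submodule.mem_top
  obtain ⟨v, hv, hveq⟩ := this
  refine ⟨v, hv, fun i hi => ?_⟩
  exact congrFun hveq ⟨i, hi⟩

lemma fiber_card (C : Submodule (ZMod 2) (Fin 31 → ZMod 2))
    [DecidablePred (· ∈ C)]
    (hdim : Module.finrank (ZMod 2) C = 13)
    (hdual : ∀ w : Fin 31 → ZMod 2, (∀ v ∈ C, dotProduct v w = 0) → w ≠ 0 →
      7 ≤ hammingNorm w)
    (S : Finset (Fin 31)) (hS : S.card ≤ 6) :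
    ((Finset.univ.filter (· ∈ C)).filter fun v => ∀ i ∈ S, v i = 1).card
      = 2 ^ (13 - S.card) := by
  classical
  set T : Finset (Fin 31 → ZMod 2) := Finset.univ.filter (· ∈ C) with hT
  set F : (↥S → ZMod 2) → ℕ :=
    fun c => (T.filter fun v => ∀ i : ↥S, v i = c i).card with hF
  have hsum : ∑ c : ↥S → ZMod 2, F c = T.card := by
    rw [Finset.card_eq_sum_card_fiberwise
      (f := fun v (i : ↥S) => v i) (t := Finset.univ) (fun v _ => Finset.mem_univ _)]
    refine Finset.sum_congr rfl fun c _ => ?_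
    simp only [hF, funext_iff]
  have memT : ∀ v, v ∈ T ↔ v ∈ C := by
    intro v; rw [hT, Finset.mem_filter]; simp
  have hconst : ∀ c : ↥S → ZMod 2, F c = F (fun _ => 1) := by
    intro c
    obtain ⟨v₀, hv₀C, hv₀⟩ := proj_surj C hdual S hS
      (fun i => (if h : i ∈ S then c ⟨i, h⟩ else 0) + 1)
    have hv₀' : ∀ i : ↥S, v₀ i = c i + 1 := by
      intro i
      have h2 := hv₀ i i.2
      rwa [dif_pos i.2, Subtype.eta] at h2
    refine Finset.card_bij' (fun v _ => v + v₀) (fun v _ => v + v₀) ?_ ?_ ?_ ?_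
    · intro v hv
      rw [Finset.mem_filter] at hv
      refine Finset.mem_filter.mpr
        ⟨(memT _).mpr (C.add_mem ((memT _).mp hv.1) hv₀C), fun i => ?_⟩
      show v ↑i + v₀ ↑i = 1
      rw [hv.2 i, hv₀' i]
      have : ∀ a : ZMod 2, a + (a + 1) = 1 := by decide
      exact this _
    · intro v hv
      rw [Finset.mem_filter] at hv
      refine Finset.mem_filter.mpr
        ⟨(memT _).mpr (C.add_mem ((memT _).mp hv.1) hv₀C), fun i => ?_⟩
      show v ↑i + v₀ ↑i = c i
      rw [hv.2 i, hv₀' i]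
      have : ∀ a : ZMod 2, 1 + (a + 1) = a := by decide
      exact this _
    · intro v _
      funext i
      show v i + v₀ i + v₀ i = v i
      have : ∀ a b : ZMod 2, a + b + b = a := by decide
      exact this _ _
    · intro v _
      funext i
      show v i + v₀ i + v₀ i = v i
      have : ∀ a b : ZMod 2, a + b + b = a := by decide
      exact this _ _
  have hcardT : T.card = 2 ^ 13 := by
    have h1 : T.card = Fintype.card {v : Fin 31 → ZMod 2 // v ∈ C} :=
      (Fintype.card_subtype _).symm
    have h2 : Fintype.card {v : Fin 31 → ZMod 2 // v ∈ C} = Fintype.card C :=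
      Fintype.card_congr (Equiv.refl _)
    have h3 : Fintype.card C = Fintype.card (ZMod 2) ^ Module.finrank (ZMod 2) C :=
      Module.card_eq_pow_finrank
    rw [h1, h2, h3, hdim, ZMod.card]
  have hsum2 : 2 ^ S.card * F (fun _ => 1) = 2 ^ 13 := by
    rw [← hcardT, ← hsum]
    rw [Finset.sum_congr rfl fun c _ => hconst c, Finset.sum_const, Finset.card_univ]
    simp [Fintype.card_fun, Fintype.card_coe, mul_comm]
  have hfinal : F (fun _ => 1) = 2 ^ (13 - S.card) := by
    have hpow : (2:ℕ) ^ 13 = 2 ^ S.card * 2 ^ (13 - S.card) := by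
      rw [← pow_add]
      congr 1
      omega
    rw [hpow] at hsum2
    exact Nat.eq_of_mul_eq_mul_left (by positivity) hsum2
  rw [← hfinal, hF]
  congr 1
  apply Finset.filter_congr
  intro v _
  simp [Subtype.forall]

lemma moment (C : Submodule (ZMod 2) (Fin 31 → ZMod 2))
    [DecidablePred (· ∈ C)]
    (hdim : Module.finrank (ZMod 2) C = 13)
    (hdual : ∀ w : Fin 31 → ZMod 2, (∀ v ∈ C, dotProduct v w = 0) → w ≠ 0 →
      7 ≤ hammingNorm w)
    (t : ℕ) (ht : t ≤ 6) :
    ∑ v ∈ Finset.univ.filter (· ∈ C), (hammingNorm v).choose t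
      = Nat.choose 31 t * 2 ^ (13 - t) := by
  classical
  set T : Finset (Fin 31 → ZMod 2) := Finset.univ.filter (· ∈ C) with hT
  have hsupp : ∀ v : Fin 31 → ZMod 2,
      hammingNorm v = (Finset.univ.filter (fun i => v i ≠ 0)).card := by
    intro v
    simp [hammingNorm, Finset.filter]
  have step1 : ∀ v : Fin 31 → ZMod 2,
      (hammingNorm v).choose t
        = ∑ S ∈ Finset.powersetCard t Finset.univ,
            (if S ⊆ Finset.univ.filter (fun i => v i ≠ 0) then 1 else 0) := by
    intro v
    rw [hsupp, ← Finset.card_powersetCard, ← Finset.card_filter]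
    congr 1
    ext A
    simp only [Finset.mem_powersetCard, Finset.mem_filter]
    constructor
    · intro h; exact ⟨⟨A.subset_univ, h.2⟩, h.1⟩
    · intro h; exact ⟨h.2, h.1.2⟩
  calc ∑ v ∈ T, (hammingNorm v).choose t
      = ∑ v ∈ T, ∑ S ∈ Finset.powersetCard t Finset.univ,
          (if S ⊆ Finset.univ.filter (fun i => v i ≠ 0) then 1 else 0) :=
        Finset.sum_congr rfl fun v _ => step1 v
    _ = ∑ S ∈ Finset.powersetCard t Finset.univ, ∑ v ∈ T,
          (if S ⊆ Finset.univ.filter (fun i => v i ≠ 0) then 1 else 0) :=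
        Finset.sum_comm
    _ = ∑ S ∈ Finset.powersetCard t Finset.univ, (2:ℕ) ^ (13 - t) := by
        refine Finset.sum_congr rfl fun S hS => ?_
        rw [Finset.mem_powersetCard] at hS
        rw [← Finset.card_filter]
        have heq : T.filter (fun v => S ⊆ Finset.univ.filter (fun i => v i ≠ 0))
            = T.filter (fun v => ∀ i ∈ S, v i = 1) := by
          apply Finset.filter_congr
          intro v _
          simp only [Finset.subset_iff, Finset.mem_filter, Finset.mem_univ, true_and]
          have h2 : ∀ a : ZMod 2, a ≠ 0 ↔ a = 1 := by decide
          constructor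
          · intro h i hi; exact (h2 _).mp (h hi)
          · intro h i hi; exact (h2 _).mpr (h i hi)
        rw [heq]
        have := fiber_card C hdim hdual S (hS.2 ▸ ht)
        rw [hS.2] at this
        exact this
    _ = Nat.choose 31 t * 2 ^ (13 - t) := by
        rw [Finset.sum_const, Finset.card_powersetCard, Finset.card_univ, Fintype.card_fin,
          smul_eq_mul]

def posP (w : ℕ) : ℕ :=
  180124560 * w + 2429280 * w.descFactorial 3 + 3696 * w.descFactorial 5

def negP (w : ℕ) : ℕ :=
  510935040 + 27876240 * w.descFactorial 2 + 126000 * w.descFactorial 4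
    + 48 * w.descFactorial 6

lemma case_check : ∀ w : ℕ, 10 ≤ w → w ≤ 31 → Even w → w ≠ 20 →
    posP w ≤ negP w := by
  intro w h1 h2 hE h20
  interval_cases w <;> revert hE h20 <;> decide

/-- Every even binary linear [31,13,10] code whose dual code has minimum
weight at least 7 contains a codeword of Hamming weight exactly 20. -/
theorem even_31_13_10_has_weight20_word
    (C : Submodule (ZMod 2) (Fin 31 → ZMod 2))
    (hdim : Module.finrank (ZMod 2) C = 13)
    (hmin : ∀ v ∈ C, v ≠ 0 → 10 ≤ hammingNorm v)
    (heven : ∀ v ∈ C, Even (hammingNorm v))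
    (hdual : ∀ w : Fin 31 → ZMod 2, (∀ v ∈ C, dotProduct v w = 0) → w ≠ 0 →
      7 ≤ hammingNorm w) :
    ∃ v ∈ C, hammingNorm v = 20 := by
  classical
  by_contra hno
  push_neg at hno
  set T : Finset (Fin 31 → ZMod 2) := Finset.univ.filter (· ∈ C) with hT
  have memT : ∀ v, v ∈ T ↔ v ∈ C := by
    intro v; rw [hT, Finset.mem_filter]; simp
  have hM : ∀ t, t ≤ 6 → ∑ v ∈ T, (hammingNorm v).choose t
      = Nat.choose 31 t * 2 ^ (13 - t) := fun t ht => moment C hdim hdual t ht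
  -- descending factorial moments
  have hD : ∀ t, t ≤ 6 → ∑ v ∈ T, (hammingNorm v).descFactorial t
      = Nat.factorial t * (Nat.choose 31 t * 2 ^ (13 - t)) := by
    intro t ht
    rw [← hM t ht, Finset.mul_sum]
    exact Finset.sum_congr rfl fun v _ => Nat.descFactorial_eq_factorial_mul_choose _ _
  have hD1 : ∑ v ∈ T, (hammingNorm v).descFactorial 1 = 126976 := by
    rw [hD 1 (by norm_num)]; decide
  have hD2 : ∑ v ∈ T, (hammingNorm v).descFactorial 2 = 1904640 := by
    rw [hD 2 (by norm_num)]; decide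
  have hD3 : ∑ v ∈ T, (hammingNorm v).descFactorial 3 = 27617280 := by
    rw [hD 3 (by norm_num)]; decide
  have hD4 : ∑ v ∈ T, (hammingNorm v).descFactorial 4 = 386641920 := by
    rw [hD 4 (by norm_num)]; decide
  have hD5 : ∑ v ∈ T, (hammingNorm v).descFactorial 5 = 5219665920 := by
    rw [hD 5 (by norm_num)]; decide
  have hD6 : ∑ v ∈ T, (hammingNorm v).descFactorial 6 = 67855656960 := by
    rw [hD 6 (by norm_num)]; decide
  have hD0 : T.card = 8192 := by
    have := hD 0 (by norm_num)
    simpa using this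
  -- total sums
  have hPsum : ∑ v ∈ T, posP (hammingNorm v) = 109253487329280 := by
    simp only [posP]
    rw [Finset.sum_add_distrib, Finset.sum_add_distrib, ← Finset.mul_sum, ← Finset.mul_sum,
      ← Finset.mul_sum]
    have h1 : ∑ v ∈ T, hammingNorm v = 126976 := by
      rw [← hD1]; exact Finset.sum_congr rfl fun v _ => (Nat.descFactorial_one _).symm
    rw [h1, hD3, hD5]; norm_num
  have hNsum : ∑ v ∈ T, negP (hammingNorm v) = 109253735055360 := by
    simp only [negP]
    rw [Finset.sum_add_distrib, Finset.sum_add_distrib, Finset.sum_add_distrib,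
      Finset.sum_const, ← Finset.mul_sum, ← Finset.mul_sum, ← Finset.mul_sum]
    rw [hD0, hD2, hD4, hD6]; norm_num
  -- split off the zero codeword
  have h0T : (0 : Fin 31 → ZMod 2) ∈ T := (memT 0).mpr C.zero_mem
  have hkey : ∀ v ∈ T.erase 0, posP (hammingNorm v) ≤ negP (hammingNorm v) := by
    intro v hv
    rw [Finset.mem_erase] at hv
    have hvC : v ∈ C := (memT v).mp hv.2
    have h1 : 10 ≤ hammingNorm v := hmin v hvC hv.1
    have h2 : hammingNorm v ≤ 31 := by
      have := hammingNorm_le_card_fintype (x := v)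
      simpa using this
    have h3 : Even (hammingNorm v) := heven v hvC
    have h4 : hammingNorm v ≠ 20 := fun h => hno v hvC h
    exact case_check _ h1 h2 h3 h4
  have hsplitP : ∑ v ∈ T, posP (hammingNorm v)
      = posP 0 + ∑ v ∈ T.erase 0, posP (hammingNorm v) := by
    rw [← Finset.add_sum_erase T _ h0T, hammingNorm_zero]
  have hsplitN : ∑ v ∈ T, negP (hammingNorm v)
      = negP 0 + ∑ v ∈ T.erase 0, negP (hammingNorm v) := by
    rw [← Finset.add_sum_erase T _ h0T, hammingNorm_zero]
  have hle : ∑ v ∈ T.erase 0, posP (hammingNorm v)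
      ≤ ∑ v ∈ T.erase 0, negP (hammingNorm v) :=
    Finset.sum_le_sum hkey
  have hp0 : posP 0 = 0 := by decide
  have hn0 : negP 0 = 510935040 := by decide
  omega
end
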